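/- arXiv:2605.16287 — 4 statements merged into one kernel-verified Lean document; each statement's English description precedes it below -/
import Mathlib

section
/- Assume in addition that −λq < 1 + λ r log p. Then for every integer m ≥ 1, the m-th moment of the degenerate Pascal weights satisfies: Σ_{n=0}^∞ n^m · (q^n/n!) (β)_{n,λ} (1 + λ r log p)^{β/λ − n} = (1 + λ r log p)^{β/λ} · Σ_{k=1}^m S(m,k) · (q/(1 + λ r log p))^k · (β)_{k,λ} · (1 + λ q/(1 + λ r log p))^{β/λ − k}, the series on the left being absolutely convergent. -/
open Finset

/-- degenerate falling factorial `(β)_{k,lam}` -/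
noncomputable def dff (β lam : ℝ) (k : ℕ) : ℝ := ∏ i ∈ Finset.range k, (β - i * lam)

/-- Stirling numbers of the second kind -/
noncomputable def S2 (n k : ℕ) : ℝ :=
  iteratedDeriv n (fun z : ℝ => (Real.exp z - 1) ^ k) 0 / k.factorial

noncomputable def bc (a : ℝ) (n : ℕ) : ℝ := (∏ i ∈ Finset.range n, (a - i)) / n.factorial


lemma bc_zero (a : ℝ) : bc a 0 = 1 := by simp [bc]

lemma bc_succ (a : ℝ) (n : ℕ) : bc a (n + 1) * (n + 1) = bc a n * (a - n) := by
  have h1 : (n.factorial : ℝ) ≠ 0 := Nat.cast_ne_zero.2 n.factorial_ne_zero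
  have h2 : ((n:ℝ) + 1) ≠ 0 := by positivity
  simp only [bc, Finset.prod_range_succ, Nat.factorial_succ]
  push_cast
  field_simp

lemma abs_bc_le (a : ℝ) (n : ℕ) : |bc a n| ≤ ((n : ℝ) + 1) ^ (⌈|a|⌉₊) := by
  set K := ⌈|a|⌉₊ with hK
  induction n with
  | zero => simp [bc_zero]
  | succ n ih =>
    have hpos1 : (0:ℝ) < (n:ℝ)+1 := by positivity
    have hpK : (0:ℝ) < ((n:ℝ)+1)^K := by positivity
    have hb : |bc a (n+1)| = |bc a n| * (|a - n| / ((n:ℝ)+1)) := by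
      have : bc a (n+1) = bc a n * (a - n) / ((n:ℝ)+1) := by
        rw [← bc_succ a n, mul_div_assoc, div_self (ne_of_gt hpos1), mul_one]
      rw [this, abs_div, abs_mul, abs_of_pos hpos1]
      ring
    have han : |a - n| ≤ (K : ℝ) + n := by
      calc |a - n| ≤ |a| + |(n:ℝ)| := abs_sub _ _
      _ ≤ (K:ℝ) + n := by
            have h1 : |a| ≤ (K:ℝ) := Nat.le_ceil _
            have h2 : |(n:ℝ)| = n := abs_of_nonneg (by positivity)
            linarith
    have key : ((n:ℝ)+1)^K * ((K:ℝ) + n) ≤ ((n:ℝ)+2)^K * ((n:ℝ)+1) := by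
      have hge : (-2:ℝ) ≤ 1/((n:ℝ)+1) := by
        have : (0:ℝ) ≤ 1/((n:ℝ)+1) := by positivity
        linarith
      have h := one_add_mul_le_pow hge K
      have h2 := mul_le_mul_of_nonneg_right h (le_of_lt hpos1)
      have e1 : (1 + (K:ℝ)*(1/((n:ℝ)+1))) * ((n:ℝ)+1) = ((n:ℝ)+1) + K := by
        field_simp
      have e2 : (1 + 1/((n:ℝ)+1)) = ((n:ℝ)+2)/((n:ℝ)+1) := by
        field_simp
        ring
      rw [e1, e2, div_pow] at h2
      have h3 := mul_le_mul_of_nonneg_left h2 (le_of_lt hpK)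
      have e3 : ((n:ℝ)+1)^K * (((n:ℝ)+2)^K/((n:ℝ)+1)^K * ((n:ℝ)+1))
          = ((n:ℝ)+2)^K * ((n:ℝ)+1) := by
        field_simp
      rw [e3] at h3
      nlinarith [hpK]
    have hcast : ((↑(n+1):ℝ) + 1) = (n:ℝ)+2 := by push_cast; ring
    rw [hb, hcast]
    calc |bc a n| * (|a - n| / ((n:ℝ)+1)) ≤ ((n:ℝ)+1)^K * (((K:ℝ)+n) / ((n:ℝ)+1)) := by
          apply mul_le_mul ih (by gcongr) (by positivity) (by positivity)
    _ ≤ ((n:ℝ)+2)^K := by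
          rw [← mul_div_assoc, div_le_iff₀ hpos1]
          exact key

lemma summable_poly_geom (j : ℕ) {r : ℝ} (hr : |r| < 1) :
    Summable (fun n : ℕ => ((n:ℝ)+1)^j * r^n) := by
  rcases eq_or_ne r 0 with h0 | h0
  · subst h0
    apply summable_of_ne_finset_zero (s := {0})
    intro n hn
    simp only [Finset.mem_singleton] at hn
    simp [zero_pow hn]
  · have hs : Summable (fun n : ℕ => (n:ℝ)^j * r^n) :=
      summable_pow_mul_geometric_of_norm_lt_one j (by rwa [Real.norm_eq_abs])
    have hs1 : Summable (fun n : ℕ => ((n+1:ℕ):ℝ)^j * r^(n+1)) :=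
      (summable_nat_add_iff 1).mpr hs
    have := hs1.mul_left (1/r)
    apply this.congr
    intro n
    push_cast
    field_simp
    ring

lemma summable_abs_bc (a : ℝ) (j : ℕ) {y : ℝ} (hy : |y| < 1) :
    Summable (fun n : ℕ => ((n:ℝ)+1)^j * |bc a n * y ^ n|) := by
  set K := ⌈|a|⌉₊ with hK
  have h := summable_poly_geom (j + K) (r := |y|) (by rwa [abs_abs])
  apply Summable.of_nonneg_of_le (fun n => by positivity) _ h
  intro n
  rw [abs_mul, abs_pow, pow_add]
  calc ((n:ℝ)+1)^j * (|bc a n| * |y|^n) ≤ ((n:ℝ)+1)^j * (((n:ℝ)+1)^K * |y|^n) := by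
        have := abs_bc_le a n
        gcongr
  _ = ((n:ℝ)+1)^j * ((n:ℝ)+1)^K * |y|^n := by ring

lemma summable_bc (a : ℝ) {y : ℝ} (hy : |y| < 1) :
    Summable (fun n : ℕ => bc a n * y ^ n) := by
  rw [← summable_abs_iff]
  have := summable_abs_bc a 0 hy
  apply this.congr
  intro n; simp

lemma deriv_term_bound (a : ℝ) {ρ : ℝ} (hρ : 0 < ρ) {z : ℝ} (hz : |z| ≤ ρ) (n : ℕ) :
    ‖bc a n * ((n:ℝ) * z^(n-1))‖ ≤ ((n:ℝ)+1)^(⌈|a|⌉₊+1) * ρ^n / ρ := by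
  set K := ⌈|a|⌉₊ with hK
  cases n with
  | zero => simp; positivity
  | succ n =>
    have h1 : ‖bc a (n+1) * (((n+1:ℕ):ℝ) * z^n)‖ = |bc a (n+1)| * (((n:ℝ)+1) * |z|^n) := by
      rw [Real.norm_eq_abs, abs_mul, abs_mul, abs_pow]
      push_cast
      rw [abs_of_pos (by positivity : (0:ℝ) < (n:ℝ)+1)]
    rw [show (n+1) - 1 = n from rfl, h1]
    have hb := abs_bc_le a (n+1)
    have hc : ((n+1:ℕ):ℝ) + 1 = (n:ℝ) + 2 := by push_cast; ring
    rw [hc] at hb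
    have hzn : |z|^n ≤ ρ^n := pow_le_pow_left₀ (abs_nonneg z) hz n
    calc |bc a (n+1)| * (((n:ℝ)+1) * |z|^n) ≤ ((n:ℝ)+2)^K * (((n:ℝ)+2) * ρ^n) := by
          have hb2 : ((n:ℝ)+1) * |z|^n ≤ ((n:ℝ)+2) * ρ^n := by
            apply mul_le_mul (by linarith) hzn (by positivity) (by linarith)
          apply mul_le_mul hb hb2 (by positivity) (by positivity)
    _ = ((n:ℝ)+2)^(K+1) * ρ^n := by rw [pow_succ]; ring
    _ = ((n:ℝ)+2)^(K+1) * ρ^(n+1) / ρ := by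
          rw [pow_succ]
          field_simp
          ring
    _ = (((n+1:ℕ):ℝ)+1)^(K+1) * ρ^(n+1) / ρ := by rw [hc]

section binom
variable (a : ℝ)

noncomputable def gfun (a : ℝ) : ℝ → ℝ := fun y => ∑' n : ℕ, bc a n * y ^ n
noncomputable def dfun (a : ℝ) : ℝ → ℝ := fun y => ∑' n : ℕ, bc a n * ((n:ℝ) * y ^ (n-1))

lemma summable_u {ρ : ℝ} (h0 : 0 < ρ) (h1 : ρ < 1) :
    Summable (fun n : ℕ => ((n:ℝ)+1)^(⌈|a|⌉₊+1) * ρ^n / ρ) := by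
  have := (summable_poly_geom (⌈|a|⌉₊+1) (r := ρ) (by rw [abs_of_pos h0]; exact h1)).div_const ρ
  exact this

lemma summable_dterm {y : ℝ} (hy : |y| < 1) :
    Summable (fun n : ℕ => bc a n * ((n:ℝ) * y ^ (n-1))) := by
  set ρ := (|y| + 1)/2 with hρ
  have h0 : 0 < ρ := by have := abs_nonneg y; rw [hρ]; linarith
  have h1 : ρ < 1 := by rw [hρ]; linarith
  have hyρ : |y| ≤ ρ := by rw [hρ]; linarith
  exact Summable.of_norm_bounded (summable_u a h0 h1) (deriv_term_bound a h0 hyρ)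

lemma hasDerivAt_gfun {y : ℝ} (hy : |y| < 1) : HasDerivAt (gfun a) (dfun a y) y := by
  show HasDerivAt (fun z : ℝ => ∑' n : ℕ, bc a n * z ^ n)
    (∑' n : ℕ, bc a n * ((n:ℝ) * y ^ (n-1))) y
  set ρ := (|y| + 1)/2 with hρ
  have h0 : 0 < ρ := by have := abs_nonneg y; rw [hρ]; linarith
  have h1 : ρ < 1 := by rw [hρ]; linarith
  have hyρ : |y| < ρ := by rw [hρ]; linarith
  apply hasDerivAt_tsum_of_isPreconnected (summable_u a h0 h1)
    (isOpen_Ioo (a := -ρ) (b := ρ)) (isPreconnected_Ioo) (y₀ := 0)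
    (g := fun (n : ℕ) (z : ℝ) => bc a n * z ^ n)
    (g' := fun (n : ℕ) (z : ℝ) => bc a n * ((n:ℝ) * z ^ (n-1)))
  · intro n z hz
    exact (hasDerivAt_pow n z).const_mul (bc a n)
  · intro n z hz
    rw [Set.mem_Ioo] at hz
    exact deriv_term_bound a h0 (by rw [abs_le]; constructor <;> linarith [hz.1, hz.2]) n
  · rw [Set.mem_Ioo]; constructor <;> linarith
  · apply summable_of_ne_finset_zero (s := {0})
    intro n hn
    simp only [Finset.mem_singleton] at hn
    simp [zero_pow hn]
  · rw [Set.mem_Ioo]; constructor <;> [linarith [neg_abs_le y]; linarith [le_abs_self y]]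

lemma ode_gfun {y : ℝ} (hy : |y| < 1) : (1 + y) * dfun a y = a * gfun a y := by
  have Sf : Summable (fun n : ℕ => bc a n * ((n:ℝ) * y ^ (n-1))) := summable_dterm a hy
  have hshift : ∀ n : ℕ, bc a (n+1) * (((n+1:ℕ):ℝ) * y ^ n) = bc a n * (a - n) * y ^ n := by
    intro n
    have := bc_succ a n
    push_cast
    calc bc a (n+1) * (((n:ℝ)+1) * y ^ n) = (bc a (n+1) * ((n:ℝ)+1)) * y ^ n := by ring
    _ = bc a n * (a - n) * y ^ n := by rw [this]
  -- dfun a y = ∑' n, bc a n * (a-n) * y^n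
  have hd1 : dfun a y = ∑' n : ℕ, bc a n * (a - n) * y ^ n := by
    rw [dfun]
    rw [Sf.tsum_eq_zero_add]
    simp only [Nat.cast_zero, zero_mul, mul_zero, zero_add]
    apply tsum_congr
    intro n
    rw [show (n+1) - 1 = n from rfl]
    exact hshift n
  have S1 : Summable (fun n : ℕ => bc a n * (a - n) * y ^ n) := by
    have := (summable_nat_add_iff 1).mpr Sf
    apply this.congr
    intro n
    rw [show (n+1) - 1 = n from rfl]
    exact hshift n
  -- y * dfun a y = ∑' n, bc a n * n * y^n
  have hd2 : y * dfun a y = ∑' n : ℕ, bc a n * (n:ℝ) * y ^ n := by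
    rw [dfun, ← tsum_mul_left]
    apply tsum_congr
    intro n
    cases n with
    | zero => simp
    | succ n =>
      rw [show (n+1) - 1 = n from rfl]
      push_cast
      ring
  have S2 : Summable (fun n : ℕ => bc a n * (n:ℝ) * y ^ n) := by
    apply (Sf.mul_left y).congr
    intro n
    cases n with
    | zero => simp
    | succ n =>
      rw [show (n+1) - 1 = n from rfl]
      push_cast
      ring
  have : (1 + y) * dfun a y = dfun a y + y * dfun a y := by ring
  rw [this, hd2, hd1, ← S1.tsum_add S2]
  rw [gfun, ← tsum_mul_left]
  apply tsum_congr
  intro n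
  ring

lemma hasSum_binomial {x : ℝ} (hx : |x| < 1) :
    HasSum (fun n : ℕ => bc a n * x ^ n) ((1 + x) ^ a) := by
  have h1x : (0:ℝ) < 1 + x := by have := (abs_lt.1 hx).1; linarith
  -- h has zero derivative
  have hder : ∀ y ∈ Set.Ioo (-1:ℝ) 1,
      HasDerivAt (fun w => gfun a w * (1 + w) ^ (-a)) 0 y := by
    intro y hy
    rw [Set.mem_Ioo] at hy
    have hy' : |y| < 1 := abs_lt.2 hy
    have h1y : (0:ℝ) < 1 + y := by linarith [hy.1]
    have hg := hasDerivAt_gfun a hy'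
    have hp : HasDerivAt (fun w : ℝ => (1 + w) ^ (-a)) (1 * (-a) * (1 + y) ^ (-a - 1)) y := by
      exact (HasDerivAt.const_add 1 (hasDerivAt_id y)).rpow_const (Or.inl (ne_of_gt h1y))
    have hmul := hg.mul hp
    have hode := ode_gfun a hy'
    have hpow : (1 + y) * (1 + y) ^ (-a - 1) = (1 + y) ^ (-a) := by
      have h2 := Real.rpow_add h1y 1 (-a - 1)
      rw [Real.rpow_one] at h2
      rw [← h2]
      norm_num
    have hzero : dfun a y * (1 + y) ^ (-a) + gfun a y * (1 * (-a) * (1 + y) ^ (-a - 1)) = 0 := by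
      rw [← hpow]
      have h3 : dfun a y * ((1+y) * (1+y)^(-a-1)) + gfun a y * (1 * (-a) * (1+y)^(-a-1))
          = ((1+y) * dfun a y - a * gfun a y) * (1+y)^(-a-1) := by ring
      rw [h3, hode]
      ring
    rw [← hzero]
    exact hmul
  -- constancy
  have hg0 : gfun a 0 = 1 := by
    rw [gfun]
    rw [tsum_eq_single 0 (fun n hn => by simp [zero_pow hn])]
    simp [bc_zero]
  have hval : gfun a x * (1 + x) ^ (-a) = 1 := by
    rcases le_or_gt 0 x with hx0 | hx0
    · have key : gfun a x * (1 + x) ^ (-a) = gfun a 0 * (1 + (0:ℝ)) ^ (-a) := by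
        apply constant_of_has_deriv_right_zero
          (f := fun w => gfun a w * (1 + w) ^ (-a)) (a := 0) (b := x)
          ?_ ?_ x ⟨hx0, le_rfl⟩
        · intro z hz
          rw [Set.mem_Icc] at hz
          have hz' : z ∈ Set.Ioo (-1:ℝ) 1 :=
            ⟨by linarith [hz.1], by linarith [hz.2, (abs_lt.1 hx).2]⟩
          exact ((hder z hz').differentiableAt.continuousAt).continuousWithinAt
        · intro z hz
          rw [Set.mem_Ico] at hz
          have hz' : z ∈ Set.Ioo (-1:ℝ) 1 :=
            ⟨by linarith [hz.1], by linarith [hz.2, (abs_lt.1 hx).2]⟩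
          exact (hder z hz').hasDerivWithinAt
      rw [key, hg0]
      norm_num
    · have key : gfun a 0 * (1 + (0:ℝ)) ^ (-a) = gfun a x * (1 + x) ^ (-a) := by
        apply constant_of_has_deriv_right_zero
          (f := fun w => gfun a w * (1 + w) ^ (-a)) (a := x) (b := 0)
          ?_ ?_ 0 ⟨le_of_lt hx0, le_rfl⟩
        · intro z hz
          rw [Set.mem_Icc] at hz
          have hz' : z ∈ Set.Ioo (-1:ℝ) 1 :=
            ⟨by linarith [hz.1, (abs_lt.1 hx).1], by linarith [hz.2]⟩
          exact ((hder z hz').differentiableAt.continuousAt).continuousWithinAt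
        · intro z hz
          rw [Set.mem_Ico] at hz
          have hz' : z ∈ Set.Ioo (-1:ℝ) 1 :=
            ⟨by linarith [hz.1, (abs_lt.1 hx).1], by linarith [hz.2]⟩
          exact (hder z hz').hasDerivWithinAt
      rw [← key, hg0]
      norm_num
  have hgx : gfun a x = (1 + x) ^ a := by
    have hne : (1 + x) ^ (-a) ≠ 0 := ne_of_gt (Real.rpow_pos_of_pos h1x _)
    have := hval
    rw [Real.rpow_neg (le_of_lt h1x)] at this hne
    field_simp at this
    linarith [this]
  have := (summable_bc a hx).hasSum
  rwa [show (∑' n : ℕ, bc a n * x ^ n) = gfun a x from rfl, hgx] at this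
end binom


lemma contDiff_ek (k : ℕ) : ContDiff ℝ ⊤ (fun z : ℝ => (Real.exp z - 1) ^ k) :=
  (Real.contDiff_exp.sub contDiff_const).pow _

lemma iter_add {n : ℕ} {f g : ℝ → ℝ} (hf : ContDiff ℝ ⊤ f) (hg : ContDiff ℝ ⊤ g) (x : ℝ) :
    iteratedDeriv n (fun z => f z + g z) x = iteratedDeriv n f x + iteratedDeriv n g x := by
  simp only [← iteratedDerivWithin_univ]
  exact iteratedDerivWithin_add (Set.mem_univ x) uniqueDiffOn_univ
    (hf.contDiffWithinAt.of_le le_top) (hg.contDiffWithinAt.of_le le_top)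

lemma iter_cmul {n : ℕ} {f : ℝ → ℝ} (hf : ContDiff ℝ ⊤ f) (c : ℝ) (x : ℝ) :
    iteratedDeriv n (fun z => c * f z) x = c * iteratedDeriv n f x := by
  simp only [← iteratedDerivWithin_univ]
  have := iteratedDerivWithin_const_smul (𝕜 := ℝ) (F := ℝ) (s := Set.univ) (x := x) (n := n)
    (f := f) (Set.mem_univ x) uniqueDiffOn_univ c (hf.contDiffWithinAt.of_le le_top)
  simpa [smul_eq_mul] using this

lemma S2_zero_succ (k : ℕ) : S2 0 (k + 1) = 0 := by
  simp [S2, iteratedDeriv_zero, Real.exp_zero]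

lemma S2_zero_zero : S2 0 0 = 1 := by
  simp [S2, iteratedDeriv_zero]

lemma S2_succ_zero (m : ℕ) : S2 (m + 1) 0 = 0 := by
  have h : (fun z : ℝ => (Real.exp z - 1) ^ 0) = fun _ : ℝ => (1:ℝ) := by
    funext z; simp
  rw [S2, h]
  rw [iteratedDeriv_succ']
  have : deriv (fun _ : ℝ => (1:ℝ)) = fun _ : ℝ => (0:ℝ) := by
    funext z; simp
  rw [this]
  have h0 : (fun _ : ℝ => (0:ℝ)) = (fun z : ℝ => (0:ℝ) * (1:ℝ)) := by funext z; simp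
  rw [h0]
  have := iter_cmul (n := m) (f := fun _ : ℝ => (1:ℝ)) contDiff_const 0 0
  simp only [this]
  simp

lemma S2_rec (m k : ℕ) : S2 (m + 1) (k + 1) = ((k:ℝ) + 1) * S2 m (k + 1) + S2 m k := by
  have hd : deriv (fun z : ℝ => (Real.exp z - 1) ^ (k + 1))
      = fun z : ℝ => ((k:ℝ)+1) * (Real.exp z - 1) ^ (k+1) + ((k:ℝ)+1) * (Real.exp z - 1) ^ k := by
    funext z
    have h1 : HasDerivAt (fun z : ℝ => (Real.exp z - 1) ^ (k+1))
        (((k:ℕ)+1 : ℕ) * (Real.exp z - 1) ^ k * Real.exp z) z := by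
      have := ((Real.hasDerivAt_exp z).sub_const 1).fun_pow (k+1)
      simpa using this
    rw [h1.deriv]
    push_cast
    ring
  have e1 : iteratedDeriv (m+1) (fun z : ℝ => (Real.exp z - 1) ^ (k+1)) 0
      = ((k:ℝ)+1) * iteratedDeriv m (fun z : ℝ => (Real.exp z - 1) ^ (k+1)) 0
        + ((k:ℝ)+1) * iteratedDeriv m (fun z : ℝ => (Real.exp z - 1) ^ k) 0 := by
    rw [iteratedDeriv_succ', hd]
    rw [iter_add (contDiff_const.mul (contDiff_ek (k+1))) (contDiff_const.mul (contDiff_ek k)) 0]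
    rw [iter_cmul (contDiff_ek (k+1)), iter_cmul (contDiff_ek k)]
  rw [S2, S2, S2, e1]
  have hf1 : ((k+1).factorial : ℝ) = ((k:ℝ)+1) * (k.factorial : ℝ) := by
    rw [Nat.factorial_succ]; push_cast; ring
  rw [hf1]
  have h2 : ((k:ℝ)+1) ≠ 0 := by positivity
  have h3 : (k.factorial : ℝ) ≠ 0 := Nat.cast_ne_zero.2 k.factorial_ne_zero
  field_simp


lemma S2_eq_zero : ∀ m k : ℕ, m < k → S2 m k = 0 := by
  intro m
  induction m with
  | zero =>
    intro k hk
    cases k with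
    | zero => omega
    | succ k => exact S2_zero_succ k
  | succ m ih =>
    intro k hk
    cases k with
    | zero => omega
    | succ k =>
      rw [S2_rec]
      rw [ih (k+1) (by omega), ih k (by omega)]
      ring

lemma mul_descFactorial (n k : ℕ) :
    (n : ℝ) * (n.descFactorial k : ℝ)
      = (n.descFactorial (k+1) : ℝ) + (k : ℝ) * (n.descFactorial k : ℝ) := by
  rcases le_or_gt k n with h | h
  · have hd : n.descFactorial (k+1) = (n - k) * n.descFactorial k := Nat.descFactorial_succ n k
    rw [hd]
    push_cast [Nat.cast_sub h]
    ring
  · rw [Nat.descFactorial_eq_zero_iff_lt.2 h, Nat.descFactorial_eq_zero_iff_lt.2 (by omega)]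
    simp

lemma pow_eq_sum_S2 (m n : ℕ) :
    ((n:ℝ)) ^ m = ∑ k ∈ Finset.range (m+1), S2 m k * (n.descFactorial k : ℝ) := by
  induction m with
  | zero => simp [S2_zero_zero]
  | succ m ih =>
    have step : ((n:ℝ)) ^ (m+1) = (n:ℝ) * ∑ k ∈ Finset.range (m+1), S2 m k * (n.descFactorial k : ℝ) := by
      rw [← ih, pow_succ]
      ring
    rw [step, Finset.mul_sum]
    have e1 : ∀ k, (n:ℝ) * (S2 m k * (n.descFactorial k : ℝ))
        = S2 m k * (n.descFactorial (k+1) : ℝ) + S2 m k * ((k:ℝ) * (n.descFactorial k : ℝ)) := by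
      intro k
      have := mul_descFactorial n k
      calc (n:ℝ) * (S2 m k * (n.descFactorial k : ℝ))
          = S2 m k * ((n:ℝ) * (n.descFactorial k : ℝ)) := by ring
      _ = S2 m k * ((n.descFactorial (k+1) : ℝ) + (k:ℝ) * (n.descFactorial k : ℝ)) := by rw [this]
      _ = _ := by ring
    rw [Finset.sum_congr rfl (fun k _ => e1 k), Finset.sum_add_distrib]
    -- target : ∑_{k ∈ range (m+2)} S2 (m+1) k * desc n k
    rw [Finset.sum_range_succ' (fun k => S2 (m+1) k * (n.descFactorial k : ℝ)) (m+1)]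
    rw [S2_succ_zero]
    simp only [Nat.descFactorial_zero, Nat.cast_one, mul_one, zero_mul, add_zero]
    have e2 : ∀ k, S2 (m+1) (k+1) * (n.descFactorial (k+1) : ℝ)
        = ((k:ℝ)+1) * S2 m (k+1) * (n.descFactorial (k+1) : ℝ)
          + S2 m k * (n.descFactorial (k+1) : ℝ) := by
      intro k
      rw [S2_rec]
      ring
    rw [Finset.sum_congr rfl (fun k _ => e2 k), Finset.sum_add_distrib]
    have e3 : ∑ k ∈ Finset.range (m+1), S2 m k * ((k:ℝ) * (n.descFactorial k : ℝ))
        = ∑ k ∈ Finset.range (m+1), ((k:ℝ)+1) * S2 m (k+1) * (n.descFactorial (k+1) : ℝ) := by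
      rw [Finset.sum_range_succ' (fun k => S2 m k * ((k:ℝ) * (n.descFactorial k : ℝ))) m]
      simp only [Nat.cast_zero, zero_mul, mul_zero, add_zero]
      rw [Finset.sum_range_succ (fun k => ((k:ℝ)+1) * S2 m (k+1) * (n.descFactorial (k+1) : ℝ)) m]
      rw [S2_eq_zero m (m+1) (by omega)]
      simp only [mul_zero, zero_mul, mul_zero, add_zero]
      apply Finset.sum_congr rfl
      intro k _
      push_cast
      ring
    rw [e3]
    ring

lemma dff_bc {lam : ℝ} (hlam : lam ≠ 0) (β x : ℝ) (n : ℕ) :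
    dff β lam n * x ^ n / n.factorial = bc (β / lam) n * (lam * x) ^ n := by
  have hprod : dff β lam n = lam ^ n * ∏ i ∈ Finset.range n, (β / lam - i) := by
    rw [dff]
    rw [show lam ^ n = ∏ _i ∈ Finset.range n, lam by rw [Finset.prod_const, Finset.card_range]]
    rw [← Finset.prod_mul_distrib]
    apply Finset.prod_congr rfl
    intro i _
    field_simp
  rw [hprod, bc, mul_pow]
  ring

lemma hasSum_dff {lam : ℝ} (hlam : lam ≠ 0) (β : ℝ) {x : ℝ} (hx : |lam * x| < 1) :
    HasSum (fun n : ℕ => dff β lam n * x ^ n / n.factorial) ((1 + lam * x) ^ (β / lam)) := by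
  have hfun : (fun n : ℕ => dff β lam n * x ^ n / n.factorial)
      = fun n : ℕ => bc (β / lam) n * (lam * x) ^ n := funext fun n => dff_bc hlam β x n
  rw [hfun]
  exact hasSum_binomial _ hx

lemma descFactorial_add_mul (n k : ℕ) :
    (n + k).descFactorial k * n.factorial = (n + k).factorial := by
  induction k with
  | zero => simp
  | succ k ih =>
    have h1 : n + (k+1) = (n + k) + 1 := by omega
    rw [h1, Nat.succ_descFactorial_succ, Nat.factorial_succ]
    calc (n + k + 1) * (n + k).descFactorial k * n.factorial
        = (n + k + 1) * ((n + k).descFactorial k * n.factorial) := by ring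
    _ = (n + k + 1) * (n + k).factorial := by rw [ih]

lemma dff_split (β lam : ℝ) (k n : ℕ) :
    dff β lam (n + k) = dff β lam k * dff (β - k * lam) lam n := by
  rw [dff, dff, dff, add_comm n k, Finset.prod_range_add]
  congr 1
  apply Finset.prod_congr rfl
  intro i _
  push_cast
  ring

lemma hasSum_dff_desc {lam : ℝ} (hlam : lam ≠ 0) (β : ℝ) (k : ℕ) {x : ℝ}
    (hx : |lam * x| < 1) :
    HasSum (fun n : ℕ => (n.descFactorial k : ℝ) * (dff β lam n * x ^ n / n.factorial))
      (dff β lam k * x ^ k * (1 + lam * x) ^ (β / lam - (k:ℝ))) := by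
  set f : ℕ → ℝ := fun n => (n.descFactorial k : ℝ) * (dff β lam n * x ^ n / n.factorial) with hf
  have hzero : ∀ i ∈ Finset.range k, f i = 0 := by
    intro i hi
    rw [Finset.mem_range] at hi
    simp [hf, Nat.descFactorial_eq_zero_iff_lt.2 hi]
  have hshift : ∀ n : ℕ, f (n + k)
      = dff β lam k * x ^ k * (dff (β - k * lam) lam n * x ^ n / n.factorial) := by
    intro n
    have hfac : ((n+k).descFactorial k : ℝ) = ((n+k).factorial : ℝ) / (n.factorial : ℝ) := by
      have := descFactorial_add_mul n k
      have hn : (n.factorial : ℝ) ≠ 0 := Nat.cast_ne_zero.2 n.factorial_ne_zero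
      field_simp
      exact_mod_cast this
    have hnk : ((n+k).factorial : ℝ) ≠ 0 := Nat.cast_ne_zero.2 (n+k).factorial_ne_zero
    have hn : (n.factorial : ℝ) ≠ 0 := Nat.cast_ne_zero.2 n.factorial_ne_zero
    rw [hf]
    simp only []
    rw [hfac, dff_split β lam k n, pow_add]
    field_simp
  have hsum0 : ∑ i ∈ Finset.range k, f i = 0 := Finset.sum_eq_zero hzero
  rw [show (HasSum (fun n : ℕ => (n.descFactorial k : ℝ) * (dff β lam n * x ^ n / n.factorial))
      (dff β lam k * x ^ k * (1 + lam * x) ^ (β / lam - (k:ℝ)))) = HasSum f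
      (dff β lam k * x ^ k * (1 + lam * x) ^ (β / lam - (k:ℝ))) from rfl]
  rw [← hasSum_nat_add_iff' k, hsum0, sub_zero]
  have h1 := (hasSum_dff hlam (β - k * lam) hx).mul_left (dff β lam k * x ^ k)
  have hexp : (β - k * lam) / lam = β / lam - (k:ℝ) := by field_simp
  rw [hexp] at h1
  have hfun2 : (fun n : ℕ => f (n + k))
      = fun n : ℕ => dff β lam k * x ^ k * (dff (β - k * lam) lam n * x ^ n / n.factorial) :=
    funext hshift
  rw [hfun2]
  exact h1


theorem stmt3 (lam β p q r : ℝ) (m : ℕ) (hlam : lam < 0) (hβ : 0 < β)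
    (hp : 0 < p) (hp1 : p < 1) (hq : q = 1 - p) (hr : 0 < r) (hm : 1 ≤ m)
    (hcond : -lam * q < 1 + lam * r * Real.log p) :
    Summable (fun n : ℕ =>
      |(n : ℝ) ^ m * q ^ n / n.factorial * dff β lam n *
        (1 + lam * r * Real.log p) ^ (β / lam - n)|) ∧
    ∑' n : ℕ, (n : ℝ) ^ m * q ^ n / n.factorial * dff β lam n *
        (1 + lam * r * Real.log p) ^ (β / lam - n)
      = (1 + lam * r * Real.log p) ^ (β / lam) *
        ∑ k ∈ Finset.Icc 1 m,
          S2 m k * (q / (1 + lam * r * Real.log p)) ^ k * dff β lam k *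
            (1 + lam * q / (1 + lam * r * Real.log p)) ^ (β / lam - k) := by
  have hlam' : lam ≠ 0 := ne_of_lt hlam
  set A := 1 + lam * r * Real.log p with hA
  have hlogp : Real.log p < 0 := Real.log_neg hp hp1
  have hApos' : 0 < lam * r * Real.log p :=
    mul_pos_of_neg_of_neg (mul_neg_of_neg_of_pos hlam hr) hlogp
  have hA1 : 1 < A := by rw [hA]; linarith
  have hA0 : 0 < A := by linarith
  have hq0 : 0 < q := by rw [hq]; linarith
  set x := q / A with hx
  have hx0 : 0 < x := div_pos hq0 hA0
  set a := β / lam with ha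
  have hylt : |lam * x| < 1 := by
    rw [abs_mul, abs_of_neg hlam, abs_of_pos hx0, hx, ← mul_div_assoc]
    rw [div_lt_one hA0]
    exact hcond
  have h1y : 0 < 1 + lam * x := by
    have := abs_lt.1 hylt
    linarith [this.1]
  -- term rewriting
  have ht : ∀ n : ℕ, (n : ℝ) ^ m * q ^ n / n.factorial * dff β lam n * A ^ (β / lam - (n:ℝ))
      = A ^ (β / lam) * ((n:ℝ) ^ m * (dff β lam n * x ^ n / n.factorial)) := by
    intro n
    have hAn : A ^ (β / lam - (n:ℝ)) = A ^ (β / lam) / A ^ (n:ℕ) := by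
      rw [Real.rpow_sub hA0, Real.rpow_natCast]
    have hxn : x ^ n = q ^ n / A ^ n := by rw [hx, div_pow]
    have hAnne : (A:ℝ) ^ (n:ℕ) ≠ 0 := pow_ne_zero _ (ne_of_gt hA0)
    have hfne : (n.factorial : ℝ) ≠ 0 := Nat.cast_ne_zero.2 n.factorial_ne_zero
    rw [hAn, hxn]
    field_simp
  have htfun : (fun n : ℕ => (n : ℝ) ^ m * q ^ n / n.factorial * dff β lam n
      * A ^ (β / lam - (n:ℝ)))
      = fun n : ℕ => A ^ (β / lam) * ((n:ℝ) ^ m * (dff β lam n * x ^ n / n.factorial)) :=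
    funext ht
  -- summability
  have hsum : Summable (fun n : ℕ =>
      |(n : ℝ) ^ m * q ^ n / n.factorial * dff β lam n * A ^ (β / lam - (n:ℝ))|) := by
    have hb := (summable_abs_bc a m hylt).mul_left (A ^ (β / lam))
    apply Summable.of_nonneg_of_le (fun n => abs_nonneg _) _ hb
    intro n
    rw [ht n]
    have hw : dff β lam n * x ^ n / n.factorial = bc a n * (lam * x) ^ n := dff_bc hlam' β x n
    rw [hw, abs_mul, abs_mul]
    rw [abs_of_pos (Real.rpow_pos_of_pos hA0 _)]
    apply mul_le_mul_of_nonneg_left _ (le_of_lt (Real.rpow_pos_of_pos hA0 _))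
    apply mul_le_mul_of_nonneg_right _ (abs_nonneg _)
    rw [abs_pow, abs_of_nonneg (Nat.cast_nonneg n : (0:ℝ) ≤ (n:ℝ))]
    apply pow_le_pow_left₀ (Nat.cast_nonneg n)
    linarith
  refine ⟨hsum, ?_⟩
  -- the tsum computation
  set w : ℕ → ℝ := fun n => dff β lam n * x ^ n / n.factorial with hw
  have hSk : ∀ k : ℕ, Summable (fun n : ℕ => S2 m k * ((n.descFactorial k : ℝ) * w n)) :=
    fun k => ((hasSum_dff_desc hlam' β k hylt).summable).mul_left _
  have hstep1 : ∑' n : ℕ, (n : ℝ) ^ m * q ^ n / n.factorial * dff β lam n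
      * A ^ (β / lam - (n:ℝ))
      = A ^ (β / lam) * ∑' n : ℕ, (n:ℝ) ^ m * w n := by
    rw [htfun, tsum_mul_left]
  have hstep2 : ∑' n : ℕ, (n:ℝ) ^ m * w n
      = ∑ k ∈ Finset.range (m+1), S2 m k * (dff β lam k * x ^ k
          * (1 + lam * x) ^ (β / lam - (k:ℝ))) := by
    have hpt : ∀ n : ℕ, (n:ℝ) ^ m * w n
        = ∑ k ∈ Finset.range (m+1), S2 m k * ((n.descFactorial k : ℝ) * w n) := by
      intro n
      rw [pow_eq_sum_S2 m n, Finset.sum_mul]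
      apply Finset.sum_congr rfl
      intro k _
      ring
    rw [tsum_congr hpt]
    rw [Summable.tsum_finsetSum (fun k _ => hSk k)]
    apply Finset.sum_congr rfl
    intro k _
    rw [tsum_mul_left]
    rw [(hasSum_dff_desc hlam' β k hylt).tsum_eq]
  have hS20 : S2 m 0 = 0 := by
    cases m with
    | zero => omega
    | succ m' => exact S2_succ_zero m'
  have hstep3 : ∑ k ∈ Finset.range (m+1), S2 m k * (dff β lam k * x ^ k
          * (1 + lam * x) ^ (β / lam - (k:ℝ)))
      = ∑ k ∈ Finset.Icc 1 m,
          S2 m k * (q / A) ^ k * dff β lam k * (1 + lam * q / A) ^ (β / lam - (k:ℝ)) := by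
    rw [Finset.range_eq_Ico, Finset.sum_eq_sum_Ico_succ_bot (by omega : 0 < m + 1)]
    rw [hS20, zero_mul, zero_add]
    rw [show Finset.Icc 1 m = Finset.Ico 1 (m+1) from (Finset.Ico_add_one_right_eq_Icc 1 m).symm]
    apply Finset.sum_congr rfl
    intro k _
    have e1 : lam * q / A = lam * x := by rw [hx, mul_div_assoc]
    rw [e1, ← hx]
    ring
  rw [hstep1, hstep2, hstep3]
end

section
/- For every n ∈ ℕ and every real x, K^{(β)}_{n,λ}(x) = Σ_{k=0}^n (n!/(n−k)!) · r^{n−k} · c_{n−k}(r) · ε_k(x). -/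
open Finset

/-- generalized binomial coefficient `C(v, n)` -/
noncomputable def genBinom (v : ℝ) (n : ℕ) : ℝ :=
  (∏ i ∈ Finset.range n, (v - i)) / n.factorial

/-- degenerate Krawtchouk Appell polynomials -/
noncomputable def K (lam β q r : ℝ) (n : ℕ) (x : ℝ) : ℝ :=
  iteratedDeriv n
    (fun t : ℝ => ((1 + t) / (1 + q * t)) ^ x *
      (1 + lam * r * Real.log (1 + q * t)) ^ (-β / lam)) 0

/-- derivatives at 0 of the Laplace transform composed with `log(1+qt)` -/
noncomputable def gg (lam β q r : ℝ) (m : ℕ) : ℝ :=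
  iteratedDeriv m (fun t : ℝ => (1 + lam * r * Real.log (1 + q * t)) ^ (β / lam)) 0

/-- Taylor coefficients of `((1+t)/(1+qt))^x` -/
noncomputable def eps (q x : ℝ) (k : ℕ) : ℝ :=
  ∑ j ∈ Finset.range (k + 1),
    (-1 : ℝ) ^ j * genBinom x (k - j) * genBinom (x + j - 1) j * q ^ j

noncomputable def cc (lam β q r : ℝ) : ℕ → ℝ
  | 0 => 1
  | (n + 1) =>
    -∑ i ∈ Finset.range (n + 1),
      ((n + 1).choose (i + 1) : ℝ) * (r ^ (i + 1))⁻¹ * gg lam β q r (i + 1) *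
        cc lam β q r (n - i)
  termination_by n => n
  decreasing_by omega

lemma myIterWithin {f : ℝ → ℝ} {s : Set ℝ} (hs : IsOpen s) {x : ℝ} (hx : x ∈ s) (n : ℕ) :
    iteratedDerivWithin n f s x = iteratedDeriv n f x := by
  rw [iteratedDerivWithin_eq_iteratedFDerivWithin, iteratedDeriv_eq_iteratedFDeriv,
    iteratedFDerivWithin_of_isOpen n hs hx]

lemma myDiffAt {f : ℝ → ℝ} {s : Set ℝ} (hs : IsOpen s) (hf : ContDiffOn ℝ (⊤ : ℕ∞) f s)
    (k : ℕ) {x : ℝ} (hx : x ∈ s) : DifferentiableAt ℝ (iteratedDeriv k f) x := by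
  have h1 : DifferentiableOn ℝ (iteratedDerivWithin k f s) s :=
    hf.differentiableOn_iteratedDerivWithin (by
      have h1 : (k : WithTop ℕ∞) = ((k : ℕ∞) : WithTop ℕ∞) := by exact_mod_cast rfl
      rw [h1, WithTop.coe_lt_coe]
      exact WithTop.coe_lt_top k)
      hs.uniqueDiffOn
  have h2 : DifferentiableOn ℝ (iteratedDeriv k f) s :=
    h1.congr (fun y hy => (myIterWithin hs hy k).symm) |>.congr (fun y hy => rfl)
  exact h2.differentiableAt (hs.mem_nhds hx)

lemma myLeibniz {f g : ℝ → ℝ} {s : Set ℝ} (hs : IsOpen s)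
    (hf : ContDiffOn ℝ (⊤ : ℕ∞) f s) (hg : ContDiffOn ℝ (⊤ : ℕ∞) g s) (n : ℕ) :
    ∀ x ∈ s, iteratedDeriv n (fun t => f t * g t) x
      = ∑ k ∈ range (n + 1),
          (n.choose k : ℝ) * iteratedDeriv k f x * iteratedDeriv (n - k) g x := by
  induction n with
  | zero => intro x hx; simp
  | succ n ih =>
    intro x hx
    rw [iteratedDeriv_succ]
    have hev : iteratedDeriv n (fun t => f t * g t) =ᶠ[nhds x]
        fun y => ∑ k ∈ range (n + 1),
          (n.choose k : ℝ) * iteratedDeriv k f y * iteratedDeriv (n - k) g y := by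
      filter_upwards [hs.mem_nhds hx] with y hy
      exact ih y hy
    rw [hev.deriv_eq]
    have hDf : ∀ k : ℕ, HasDerivAt (iteratedDeriv k f) (iteratedDeriv (k + 1) f x) x := by
      intro k
      have := (myDiffAt hs hf k hx).hasDerivAt
      rwa [iteratedDeriv_succ]
    have hDg : ∀ k : ℕ, HasDerivAt (iteratedDeriv k g) (iteratedDeriv (k + 1) g x) x := by
      intro k
      have := (myDiffAt hs hg k hx).hasDerivAt
      rwa [iteratedDeriv_succ]
    rw [deriv_fun_sum (A := fun k y => (n.choose k : ℝ) * iteratedDeriv k f y * iteratedDeriv (n - k) g y) (fun k _ => (((hDf k).const_mul ((n.choose k : ℝ))).mul (hDg (n - k))).differentiableAt)]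
    have hterm : ∀ k ∈ range (n + 1),
        deriv (fun y => (n.choose k : ℝ) * iteratedDeriv k f y * iteratedDeriv (n - k) g y) x
          = (n.choose k : ℝ) * (iteratedDeriv (k + 1) f x * iteratedDeriv (n - k) g x
              + iteratedDeriv k f x * iteratedDeriv (n - k + 1) g x) := by
      intro k _
      rw [(((hDf k).const_mul ((n.choose k : ℝ))).fun_mul (hDg (n - k))).deriv]
      ring
    rw [Finset.sum_congr rfl hterm]
    -- Pascal recombination
    set a := fun k => iteratedDeriv k f x with ha
    set b := fun k => iteratedDeriv k g x with hb
    have key : ∑ k ∈ range (n + 2), ((n + 1).choose k : ℝ) * a k * b (n + 1 - k)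
        = (∑ k ∈ range (n + 1), (n.choose k : ℝ) * a (k + 1) * b (n - k))
          + ∑ k ∈ range (n + 1), (n.choose k : ℝ) * a k * b (n - k + 1) := by
      have e1 : ∑ k ∈ range (n + 2), ((n + 1).choose k : ℝ) * a k * b (n + 1 - k)
          = (∑ k ∈ range (n + 1), (n.choose k : ℝ) * a (k + 1) * b (n - k))
            + ((∑ k ∈ range (n + 1), (n.choose (k + 1) : ℝ) * a (k + 1) * b (n - k))
              + a 0 * b (n + 1)) := by
        rw [Finset.sum_range_succ' _ (n + 1)]
        simp only [Nat.choose_succ_succ, Nat.cast_add, Nat.succ_sub_succ, Nat.choose_zero_right,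
          Nat.cast_one, one_mul, Nat.sub_zero]
        rw [Finset.sum_congr rfl (fun k (_ : k ∈ range (n+1)) =>
          (by ring : ((n.choose k : ℝ) + (n.choose k.succ)) * a (k + 1) * b (n - k)
            = (n.choose k : ℝ) * a (k + 1) * b (n - k)
              + (n.choose (k + 1) : ℝ) * a (k + 1) * b (n - k))),
          Finset.sum_add_distrib, add_assoc]
      have e2 : (∑ k ∈ range (n + 1), (n.choose (k + 1) : ℝ) * a (k + 1) * b (n - k))
            + a 0 * b (n + 1)
          = ∑ k ∈ range (n + 1), (n.choose k : ℝ) * a k * b (n - k + 1) := by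
        have e3 : ∑ k ∈ range (n + 2), (n.choose k : ℝ) * a k * b (n + 1 - k)
            = (∑ k ∈ range (n + 1), (n.choose (k + 1) : ℝ) * a (k + 1) * b (n - k))
              + a 0 * b (n + 1) := by
          rw [Finset.sum_range_succ' _ (n + 1)]
          simp [Nat.succ_sub_succ]
        have e4 : ∑ k ∈ range (n + 2), (n.choose k : ℝ) * a k * b (n + 1 - k)
            = ∑ k ∈ range (n + 1), (n.choose k : ℝ) * a k * b (n - k + 1) := by
          rw [Finset.sum_range_succ]
          simp only [Nat.choose_succ_self, Nat.cast_zero, zero_mul, add_zero]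
          exact Finset.sum_congr rfl fun k hk => by
            rw [Nat.succ_sub (Nat.lt_succ_iff.mp (Finset.mem_range.mp hk))]
        rw [← e3, e4]
      rw [e1, e2]
    rw [key]
    rw [← Finset.sum_add_distrib]
    exact Finset.sum_congr rfl fun k _ => by ring

lemma myOpenAffine (c : ℝ) : IsOpen {t : ℝ | 0 < 1 + c * t} :=
  isOpen_lt continuous_const (continuous_const.add (continuous_const.mul continuous_id))

lemma myContDiffOnAffinePow (c y : ℝ) :
    ContDiffOn ℝ (⊤ : ℕ∞) (fun t : ℝ => (1 + c * t) ^ y) {t : ℝ | 0 < 1 + c * t} := by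
  intro t ht
  exact (((contDiff_const.add (contDiff_const.mul contDiff_id)).contDiffAt).rpow_const_of_ne
    (ne_of_gt ht)).contDiffWithinAt

lemma myIterDerivPow (c y : ℝ) (k : ℕ) :
    ∀ x : ℝ, 0 < 1 + c * x →
      iteratedDeriv k (fun t : ℝ => (1 + c * t) ^ y) x
        = (∏ i ∈ range k, (y - i)) * c ^ k * (1 + c * x) ^ (y - k) := by
  induction k with
  | zero => intro x hx; simp
  | succ k ih =>
    intro x hx
    rw [iteratedDeriv_succ]
    have hev : iteratedDeriv k (fun t : ℝ => (1 + c * t) ^ y) =ᶠ[nhds x]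
        fun t => (∏ i ∈ range k, (y - i)) * c ^ k * (1 + c * t) ^ (y - k) := by
      filter_upwards [(myOpenAffine c).mem_nhds hx] with t ht
      exact ih t ht
    rw [hev.deriv_eq]
    have h0 : HasDerivAt (fun t : ℝ => 1 + c * t) c x := by
      simpa using ((hasDerivAt_id x).const_mul c).const_add 1
    have hd := h0.rpow_const (p := y - k) (Or.inl (ne_of_gt hx))
    rw [((hd.const_mul _).deriv)]
    have hcast : y - ((k : ℝ) + 1) = y - k - 1 := by ring
    rw [prod_range_succ]
    push_cast
    rw [hcast]
    ring

lemma myNegProd (x : ℝ) (j : ℕ) :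
    ∏ i ∈ range j, (-x - i) = (-1 : ℝ) ^ j * ∏ i ∈ range j, (x + i) := by
  rw [Finset.prod_congr rfl (fun i (_ : i ∈ range j) =>
    (by ring : (-x - (i : ℝ)) = (-1) * (x + i))), Finset.prod_mul_distrib,
    Finset.prod_const, Finset.card_range]

lemma myReflProd (x : ℝ) (j : ℕ) :
    ∏ i ∈ range j, (x + (j : ℝ) - 1 - i) = ∏ i ∈ range j, (x + i) := by
  rcases Nat.eq_zero_or_pos j with h | h
  · subst h; simp
  · rw [← Finset.prod_range_reflect (fun i => x + i) j]
    refine Finset.prod_congr rfl fun i hi => ?_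
    have hij := Finset.mem_range.mp hi
    have hi' : i ≤ j - 1 := by omega
    rw [Nat.cast_sub hi', Nat.cast_sub (by omega : 1 ≤ j), Nat.cast_one]
    ring

lemma myEpsDeriv (q x : ℝ) (hq : 0 < q) (k : ℕ) :
    iteratedDeriv k (fun t : ℝ => ((1 + t) / (1 + q * t)) ^ x) 0
      = k.factorial * eps q x k := by
  set s1 : Set ℝ := {t : ℝ | 0 < 1 + 1 * t} ∩ {t : ℝ | 0 < 1 + q * t} with hs1
  have hs1open : IsOpen s1 := (myOpenAffine 1).inter (myOpenAffine q)
  have h0 : (0 : ℝ) ∈ s1 := by constructor <;> simp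
  set F : ℝ → ℝ := fun t => (1 + q * t) ^ (-x) with hF
  set G : ℝ → ℝ := fun t => (1 + 1 * t) ^ x with hG
  have hFG : ∀ t ∈ s1, ((1 + t) / (1 + q * t)) ^ x = F t * G t := by
    intro t ht
    obtain ⟨h1, h2⟩ := ht
    simp only [Set.mem_setOf_eq, one_mul] at h1 h2
    rw [hF, hG]
    simp only [one_mul]
    rw [Real.div_rpow (by linarith) (by linarith), Real.rpow_neg (by linarith)]
    rw [div_eq_mul_inv, mul_comm]
  -- replace the function near 0
  have hev : (fun t : ℝ => ((1 + t) / (1 + q * t)) ^ x) =ᶠ[nhds 0]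
      (fun t => F t * G t) := by
    filter_upwards [hs1open.mem_nhds h0] with t ht
    exact hFG t ht
  rw [hev.iteratedDeriv_eq k]
  have hFc : ContDiffOn ℝ (⊤ : ℕ∞) F s1 :=
    (myContDiffOnAffinePow q (-x)).mono Set.inter_subset_right
  have hGc : ContDiffOn ℝ (⊤ : ℕ∞) G s1 :=
    (myContDiffOnAffinePow 1 x).mono Set.inter_subset_left
  rw [myLeibniz hs1open hFc hGc k 0 h0]
  rw [eps, Finset.mul_sum]
  refine Finset.sum_congr rfl fun j hj => ?_
  have hjk : j ≤ k := Nat.lt_succ_iff.mp (Finset.mem_range.mp hj)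
  rw [hF, hG]
  rw [myIterDerivPow q (-x) j 0 (by norm_num), myIterDerivPow 1 x (k - j) 0 (by norm_num)]
  simp only [mul_zero, add_zero, Real.one_rpow, one_pow, mul_one]
  rw [myNegProd, genBinom, genBinom, ← myReflProd x j]
  have hc : (k.choose j : ℝ) * (j.factorial * (k - j).factorial) = k.factorial := by
    exact_mod_cast congrArg (Nat.cast : ℕ → ℝ)
      (by rw [← Nat.choose_mul_factorial_mul_factorial hjk]; ring)
  have hj0 : (j.factorial : ℝ) ≠ 0 := Nat.cast_ne_zero.mpr j.factorial_ne_zero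
  have hkj0 : ((k - j).factorial : ℝ) ≠ 0 := Nat.cast_ne_zero.mpr (k - j).factorial_ne_zero
  set P : ℝ := ∏ i ∈ range j, (x + (j : ℝ) - 1 - i) with hP
  set Q : ℝ := ∏ i ∈ range (k - j), (x - i) with hQ
  field_simp
  linear_combination (P * Q) * hc

def s2 (lam q r : ℝ) : Set ℝ :=
  {t : ℝ | 0 < 1 + q * t} ∩ {t : ℝ | 0 < 1 + lam * r * Real.log (1 + q * t)}

lemma s2_open (lam q r : ℝ) : IsOpen (s2 lam q r) := by
  have hcont : ContinuousOn (fun t : ℝ => 1 + lam * r * Real.log (1 + q * t))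
      {t : ℝ | 0 < 1 + q * t} := by
    exact continuousOn_const.add (continuousOn_const.mul
      (((continuous_const.add (continuous_const.mul continuous_id)).continuousOn).log
        (fun t ht => ne_of_gt ht)))
  have : s2 lam q r = {t : ℝ | 0 < 1 + q * t} ∩
      (fun t : ℝ => 1 + lam * r * Real.log (1 + q * t)) ⁻¹' Set.Ioi 0 := by
    ext t; simp [s2, Set.mem_Ioi]
  rw [this]
  exact hcont.isOpen_inter_preimage (myOpenAffine q) isOpen_Ioi

lemma s2_zero (lam q r : ℝ) : (0 : ℝ) ∈ s2 lam q r := by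
  constructor <;> simp [Real.log_one]

lemma s2_smooth (lam q r e : ℝ) :
    ContDiffOn ℝ (⊤ : ℕ∞) (fun t : ℝ => (1 + lam * r * Real.log (1 + q * t)) ^ e)
      (s2 lam q r) := by
  intro t ht
  have hu : ContDiffAt ℝ (⊤ : ℕ∞) (fun t : ℝ => 1 + lam * r * Real.log (1 + q * t)) t := by
    refine contDiffAt_const.add (contDiffAt_const.mul ?_)
    exact (Real.contDiffAt_log.mpr (ne_of_gt ht.1)).comp t
      ((contDiff_const.add (contDiff_const.mul contDiff_id)).contDiffAt)
  exact (hu.rpow_const_of_ne (ne_of_gt ht.2)).contDiffWithinAt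

lemma gvals (lam β q r : ℝ) (hq : 0 < q) (hr : 0 < r) (m : ℕ) :
    iteratedDeriv m (fun t : ℝ => (1 + lam * r * Real.log (1 + q * t)) ^ (-β / lam)) 0
      = r ^ m * cc lam β q r m := by
  induction m using Nat.strong_induction_on with
  | _ m ih =>
    match m with
    | 0 => simp [cc, Real.log_one]
    | (n + 1) =>
      have hzero : iteratedDeriv (n + 1)
          (fun t : ℝ => (1 + lam * r * Real.log (1 + q * t)) ^ (-β / lam) *
            (1 + lam * r * Real.log (1 + q * t)) ^ (β / lam)) 0 = 0 := by
        have hev : (fun t : ℝ => (1 + lam * r * Real.log (1 + q * t)) ^ (-β / lam) *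
            (1 + lam * r * Real.log (1 + q * t)) ^ (β / lam)) =ᶠ[nhds 0]
            (fun _ : ℝ => (1 : ℝ)) := by
          filter_upwards [(s2_open lam q r).mem_nhds (s2_zero lam q r)] with t ht
          rw [← Real.rpow_add ht.2, (by ring : -β / lam + β / lam = 0), Real.rpow_zero]
        rw [hev.iteratedDeriv_eq (n + 1), iteratedDeriv_eq_iteratedFDeriv,
          iteratedFDeriv_const_of_ne (Nat.succ_ne_zero n)]
        simp
      rw [myLeibniz (s2_open lam q r) (s2_smooth lam q r (-β / lam))
        (s2_smooth lam q r (β / lam)) (n + 1) 0 (s2_zero lam q r)] at hzero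
      rw [Finset.sum_range_succ] at hzero
      have hH0 : iteratedDeriv (n + 1 - (n + 1))
          (fun t : ℝ => (1 + lam * r * Real.log (1 + q * t)) ^ (β / lam)) 0 = 1 := by
        simp [Real.log_one]
      rw [Nat.sub_self] at hzero
      rw [iteratedDeriv_zero] at hzero
      simp only [Real.log_one, mul_zero, add_zero, mul_one, Real.one_rpow,
        Nat.choose_self, Nat.cast_one, one_mul] at hzero
      -- hzero : ∑ + D^{n+1}G 0 = 0
      have hmain : iteratedDeriv (n + 1)
          (fun t : ℝ => (1 + lam * r * Real.log (1 + q * t)) ^ (-β / lam)) 0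
          = -∑ i ∈ range (n + 1), ((n + 1).choose i : ℝ) *
              iteratedDeriv i
                (fun t : ℝ => (1 + lam * r * Real.log (1 + q * t)) ^ (-β / lam)) 0 *
              gg lam β q r (n + 1 - i) := by
        have := hzero
        unfold gg
        linarith [hzero]
      rw [hmain]
      -- rewrite using ih and reflect the sum
      rw [Finset.sum_congr rfl (fun i (hi : i ∈ range (n + 1)) => by
        rw [ih i (by have := Finset.mem_range.mp hi; omega)] :
        ∀ i ∈ range (n+1), ((n + 1).choose i : ℝ) *
              iteratedDeriv i
                (fun t : ℝ => (1 + lam * r * Real.log (1 + q * t)) ^ (-β / lam)) 0 *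
              gg lam β q r (n + 1 - i)
          = ((n + 1).choose i : ℝ) * (r ^ i * cc lam β q r i) * gg lam β q r (n + 1 - i))]
      rw [cc]
      rw [mul_neg, Finset.mul_sum, ← Finset.sum_range_reflect
        (fun i => ((n + 1).choose i : ℝ) * (r ^ i * cc lam β q r i) * gg lam β q r (n + 1 - i))
        (n + 1)]
      rw [neg_inj]
      refine Finset.sum_congr rfl fun i hi => ?_
      have hin : i ≤ n := by have := Finset.mem_range.mp hi; omega
      rw [show n + 1 - 1 - i = n - i from by omega,
        show (n + 1) - (n - i) = i + 1 from by omega,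
        show (n + 1).choose (n - i) = (n + 1).choose (i + 1) from by
          rw [show n - i = (n + 1) - (i + 1) from by omega]
          exact Nat.choose_symm (by omega)]
      have hrpow : r ^ (n - i) * r ^ (i + 1) = r ^ (n + 1) := by
        rw [← pow_add]; congr 1; omega
      have hrne : (r : ℝ) ^ (i + 1) ≠ 0 := pow_ne_zero _ (ne_of_gt hr)
      field_simp
      linear_combination (((n + 1).choose (i + 1) : ℝ) * cc lam β q r (n - i)
        * gg lam β q r (i + 1)) * hrpow

lemma myFGrw (q x : ℝ) : ∀ t ∈ ({t : ℝ | 0 < 1 + 1 * t} ∩ {t : ℝ | 0 < 1 + q * t}),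
    ((1 + t) / (1 + q * t)) ^ x = (1 + q * t) ^ (-x) * (1 + 1 * t) ^ x := by
  intro t ht
  obtain ⟨h1, h2⟩ := ht
  simp only [Set.mem_setOf_eq, one_mul] at h1 h2
  simp only [one_mul]
  rw [Real.div_rpow (by linarith) (by linarith), Real.rpow_neg (by linarith)]
  rw [div_eq_mul_inv, mul_comm]

lemma myFsmooth (q x : ℝ) :
    ContDiffOn ℝ (⊤ : ℕ∞) (fun t : ℝ => ((1 + t) / (1 + q * t)) ^ x)
      ({t : ℝ | 0 < 1 + 1 * t} ∩ {t : ℝ | 0 < 1 + q * t}) := by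
  refine ContDiffOn.congr ?_ (myFGrw q x)
  exact ((myContDiffOnAffinePow q (-x)).mono Set.inter_subset_right).mul
    ((myContDiffOnAffinePow 1 x).mono Set.inter_subset_left)

theorem stmt5 (lam β p q r : ℝ) (hlam : lam < 0) (hβ : 0 < β)
    (hp : 0 < p) (hp1 : p < 1) (hq : q = 1 - p) (hr : 0 < r) (n : ℕ) (x : ℝ) :
    K lam β q r n x
      = ∑ k ∈ Finset.range (n + 1),
          (n.factorial : ℝ) / (n - k).factorial * r ^ (n - k) *
            cc lam β q r (n - k) * eps q x k := by
  have hq0 : 0 < q := by rw [hq]; linarith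
  set s1 : Set ℝ := {t : ℝ | 0 < 1 + 1 * t} ∩ {t : ℝ | 0 < 1 + q * t} with hs1
  set s4 : Set ℝ := s1 ∩ s2 lam q r with hs4
  have hs4open : IsOpen s4 :=
    (((myOpenAffine 1).inter (myOpenAffine q))).inter (s2_open lam q r)
  have h04 : (0 : ℝ) ∈ s4 :=
    ⟨⟨by simp, by simp⟩, s2_zero lam q r⟩
  rw [K]
  rw [myLeibniz hs4open ((myFsmooth q x).mono Set.inter_subset_left)
    ((s2_smooth lam q r (-β / lam)).mono Set.inter_subset_right) n 0 h04]
  refine Finset.sum_congr rfl fun k hk => ?_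
  have hkn : k ≤ n := Nat.lt_succ_iff.mp (Finset.mem_range.mp hk)
  rw [myEpsDeriv q x hq0 k, gvals lam β q r hq0 hr (n - k)]
  have hfc : (n.choose k : ℝ) * k.factorial * (n - k).factorial = n.factorial := by
    exact_mod_cast congrArg (Nat.cast : ℕ → ℝ)
      (Nat.choose_mul_factorial_mul_factorial hkn)
  have h1 : ((n - k).factorial : ℝ) ≠ 0 := Nat.cast_ne_zero.mpr (n - k).factorial_ne_zero
  field_simp
  linear_combination (eps q x k * cc lam β q r (n - k)) * hfc
end

section
/- For every n ∈ ℕ and all real x, y, K^{(β)}_{n,λ}(x + y) = Σ_{k=0}^n C(n,k) · K^{(β)}_{k,λ}(x) · [y]_{n−k}. -/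
open Finset

/-- classical falling factorial -/
noncomputable def ff (y : ℝ) (m : ℕ) : ℝ := ∏ i ∈ Finset.range m, (y - i)

/-- the bracket `[y]_n` -/
noncomputable def br (q y : ℝ) (n : ℕ) : ℝ :=
  ∑ k ∈ Finset.range (n + 1), (n.choose k : ℝ) * q ^ k * ff y (n - k) * ff (-y) k

lemma contDiffOn_iteratedDeriv' {U : Set ℝ} (hU : IsOpen U) {f : ℝ → ℝ}
    (hf : ContDiffOn ℝ (⊤ : ℕ∞) f U) (k : ℕ) : ContDiffOn ℝ (⊤ : ℕ∞) (iteratedDeriv k f) U := by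
  induction k with
  | zero => simpa [iteratedDeriv_zero] using hf
  | succ k ih =>
    rw [iteratedDeriv_succ]
    exact ih.deriv_of_isOpen hU (by exact_mod_cast le_refl _)

lemma diffAt_iteratedDeriv' {U : Set ℝ} (hU : IsOpen U) {f : ℝ → ℝ}
    (hf : ContDiffOn ℝ (⊤ : ℕ∞) f U) (k : ℕ) {x : ℝ} (hx : x ∈ U) :
    DifferentiableAt ℝ (iteratedDeriv k f) x :=
  (((contDiffOn_iteratedDeriv' hU hf k).differentiableOn (by simp)).differentiableAt
    (hU.mem_nhds hx))

lemma pascal_sum (A B : ℕ → ℝ) (n : ℕ) :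
    ∑ k ∈ range (n+2), (((n+1).choose k : ℕ) : ℝ) * A k * B (n+1-k)
      = ∑ k ∈ range (n+1), ((n.choose k : ℕ) : ℝ) * (A (k+1) * B (n-k) + A k * B (n-k+1)) := by
  have h1 : ∑ k ∈ range (n+2), (((n+1).choose k : ℕ) : ℝ) * A k * B (n+1-k)
      = (∑ k ∈ range (n+1), (((n+1).choose (k+1) : ℕ) : ℝ) * A (k+1) * B (n-k)) + A 0 * B (n+1) := by
    rw [Finset.sum_range_succ' (fun k => (((n+1).choose k : ℕ) : ℝ) * A k * B (n+1-k)) (n+1)]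
    simp [Nat.succ_sub_succ]
  have h2 : ∑ k ∈ range (n+2), ((n.choose k : ℕ) : ℝ) * A k * B (n+1-k)
      = (∑ k ∈ range (n+1), ((n.choose (k+1) : ℕ) : ℝ) * A (k+1) * B (n-k)) + A 0 * B (n+1) := by
    rw [Finset.sum_range_succ' (fun k => ((n.choose k : ℕ) : ℝ) * A k * B (n+1-k)) (n+1)]
    simp [Nat.succ_sub_succ]
  have h3 : ∑ k ∈ range (n+2), ((n.choose k : ℕ) : ℝ) * A k * B (n+1-k)
      = ∑ k ∈ range (n+1), ((n.choose k : ℕ) : ℝ) * A k * B (n+1-k) := by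
    rw [Finset.sum_range_succ]
    simp [Nat.choose_succ_self]
  have h4 : ∀ k ∈ range (n+1), ((n.choose k : ℕ) : ℝ) * A k * B (n+1-k)
      = ((n.choose k : ℕ) : ℝ) * A k * B (n-k+1) := by
    intro k hk
    rw [Nat.succ_sub (Nat.lt_succ_iff.mp (mem_range.mp hk))]
  calc ∑ k ∈ range (n+2), (((n+1).choose k : ℕ) : ℝ) * A k * B (n+1-k)
      = (∑ k ∈ range (n+1), (((n.choose k + n.choose (k+1) : ℕ)) : ℝ) * A (k+1) * B (n-k))
          + A 0 * B (n+1) := by rw [h1]; simp [Nat.choose_succ_succ]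
    _ = (∑ k ∈ range (n+1), ((n.choose k : ℕ) : ℝ) * A (k+1) * B (n-k))
          + ((∑ k ∈ range (n+1), ((n.choose (k+1) : ℕ) : ℝ) * A (k+1) * B (n-k)) + A 0 * B (n+1)) := by
        rw [← add_assoc, ← Finset.sum_add_distrib]
        congr 1
        exact Finset.sum_congr rfl fun k _ => by push_cast; ring
    _ = (∑ k ∈ range (n+1), ((n.choose k : ℕ) : ℝ) * A (k+1) * B (n-k))
          + ∑ k ∈ range (n+1), ((n.choose k : ℕ) : ℝ) * A k * B (n-k+1) := by
        rw [← h2, h3, Finset.sum_congr rfl h4]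
    _ = ∑ k ∈ range (n+1), ((n.choose k : ℕ) : ℝ) * (A (k+1) * B (n-k) + A k * B (n-k+1)) := by
        rw [← Finset.sum_add_distrib]
        apply Finset.sum_congr rfl; intro k hk; ring

lemma leibniz' {U : Set ℝ} (hU : IsOpen U) {f g : ℝ → ℝ}
    (hf : ContDiffOn ℝ (⊤ : ℕ∞) f U) (hg : ContDiffOn ℝ (⊤ : ℕ∞) g U) (n : ℕ) :
    ∀ x ∈ U, iteratedDeriv n (fun t => f t * g t) x
      = ∑ k ∈ range (n+1), ((n.choose k : ℕ) : ℝ) * iteratedDeriv k f x * iteratedDeriv (n-k) g x := by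
  induction n with
  | zero => intro x hx; simp
  | succ n ih =>
    intro x hx
    have hev : iteratedDeriv n (fun t => f t * g t) =ᶠ[nhds x]
        fun t => ∑ k ∈ range (n+1),
          ((n.choose k : ℕ) : ℝ) * iteratedDeriv k f t * iteratedDeriv (n-k) g t :=
      Filter.eventually_of_mem (hU.mem_nhds hx) (fun t ht => ih t ht)
    rw [iteratedDeriv_succ, hev.deriv_eq]
    have hdiff : ∀ k ∈ range (n+1), DifferentiableAt ℝ
        (fun t => ((n.choose k : ℕ) : ℝ) * iteratedDeriv k f t * iteratedDeriv (n-k) g t) x := by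
      intro k _
      exact (((diffAt_iteratedDeriv' hU hf k hx).const_mul _).mul
        (diffAt_iteratedDeriv' hU hg (n-k) hx))
    rw [deriv_fun_sum hdiff]
    have hterm : ∀ k ∈ range (n+1),
        deriv (fun t => ((n.choose k : ℕ) : ℝ) * iteratedDeriv k f t * iteratedDeriv (n-k) g t) x
        = ((n.choose k : ℕ) : ℝ) * (iteratedDeriv (k+1) f x * iteratedDeriv (n-k) g x
            + iteratedDeriv k f x * iteratedDeriv (n-k+1) g x) := by
      intro k _
      have e1 : (fun t => ((n.choose k : ℕ) : ℝ) * iteratedDeriv k f t * iteratedDeriv (n-k) g t)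
          = fun t => ((n.choose k : ℕ) : ℝ) * (iteratedDeriv k f t * iteratedDeriv (n-k) g t) := by
        funext t; ring
      rw [e1, deriv_const_mul _ ((diffAt_iteratedDeriv' hU hf k hx).fun_mul
        (diffAt_iteratedDeriv' hU hg (n-k) hx)),
        deriv_fun_mul (diffAt_iteratedDeriv' hU hf k hx) (diffAt_iteratedDeriv' hU hg (n-k) hx),
        ← iteratedDeriv_succ, ← iteratedDeriv_succ]
    rw [Finset.sum_congr rfl hterm]
    exact (pascal_sum (fun k => iteratedDeriv k f x) (fun k => iteratedDeriv k g x) n).symm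


lemma iteratedDeriv_rpow_aux (c a : ℝ) (n : ℕ) :
    ∀ x : ℝ, 0 < 1 + c * x →
      iteratedDeriv n (fun t : ℝ => (1 + c * t) ^ a) x
        = c ^ n * ff a n * (1 + c * x) ^ (a - n) := by
  induction n with
  | zero => intro x hx; simp [ff]
  | succ n ih =>
    intro x hx
    have hU : IsOpen {t : ℝ | 0 < 1 + c * t} :=
      isOpen_lt continuous_const (by continuity)
    have hev : iteratedDeriv n (fun t : ℝ => (1 + c * t) ^ a) =ᶠ[nhds x]
        fun t => c ^ n * ff a n * (1 + c * t) ^ (a - n) :=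
      Filter.eventually_of_mem (hU.mem_nhds hx) (fun t ht => ih t ht)
    rw [iteratedDeriv_succ, hev.deriv_eq]
    have hb : HasDerivAt (fun t : ℝ => 1 + c * t) c x := by
      simpa using ((hasDerivAt_id x).const_mul c).const_add 1
    have hd : HasDerivAt (fun t : ℝ => (1 + c * t) ^ (a - n))
        (c * (a - n) * (1 + c * x) ^ (a - n - 1)) x :=
      hb.rpow_const (Or.inl (ne_of_gt hx))
    rw [deriv_const_mul _ hd.differentiableAt, hd.deriv]
    have hffs : ff a (n+1) = ff a n * (a - n) := by
      rw [ff, Finset.prod_range_succ]; rfl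
    have he : a - ((n+1 : ℕ) : ℝ) = a - n - 1 := by push_cast; ring
    rw [hffs, he]
    ring

lemma contDiffOn_rpow_aux (c a : ℝ) :
    ContDiffOn ℝ (⊤ : ℕ∞) (fun t : ℝ => (1 + c * t) ^ a) {t : ℝ | 0 < 1 + c * t} := by
  apply ContDiffOn.rpow_const_of_ne
  · exact (contDiff_const.add (contDiff_const.mul contDiff_id)).contDiffOn
  · exact fun t ht => ne_of_gt ht

lemma iteratedDeriv_G (q y : ℝ) (m : ℕ) :
    iteratedDeriv m (fun t : ℝ => ((1 + t) / (1 + q * t)) ^ y) 0 = br q y m := by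
  have hU1 : IsOpen {t : ℝ | 0 < 1 + 1 * t} := isOpen_lt continuous_const (by continuity)
  have hU2 : IsOpen {t : ℝ | 0 < 1 + q * t} := isOpen_lt continuous_const (by continuity)
  set U : Set ℝ := {t | 0 < 1 + 1 * t} ∩ {t | 0 < 1 + q * t} with hUdef
  have hU : IsOpen U := hU1.inter hU2
  have h0 : (0:ℝ) ∈ U := by constructor <;> simp
  have hev : (fun t : ℝ => ((1 + t) / (1 + q * t)) ^ y) =ᶠ[nhds 0]
      fun t => (fun s : ℝ => (1 + 1 * s) ^ y) t * (fun s : ℝ => (1 + q * s) ^ (-y)) t := by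
    refine Filter.eventually_of_mem (hU.mem_nhds h0) ?_
    rintro t ⟨h1, h2⟩
    simp only [one_mul] at h1 ⊢
    rw [Real.div_rpow (le_of_lt h1) (le_of_lt h2), Real.rpow_neg (le_of_lt h2), div_eq_mul_inv]
  rw [hev.iteratedDeriv_eq]
  have hA : ContDiffOn ℝ (⊤ : ℕ∞) (fun s : ℝ => (1 + 1 * s) ^ y) U :=
    (contDiffOn_rpow_aux 1 y).mono Set.inter_subset_left
  have hB : ContDiffOn ℝ (⊤ : ℕ∞) (fun s : ℝ => (1 + q * s) ^ (-y)) U :=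
    (contDiffOn_rpow_aux q (-y)).mono Set.inter_subset_right
  rw [leibniz' hU hA hB m 0 h0]
  have hterm : ∀ k ∈ range (m+1),
      ((m.choose k : ℕ) : ℝ) * iteratedDeriv k (fun s : ℝ => (1 + 1 * s) ^ y) 0
          * iteratedDeriv (m-k) (fun s : ℝ => (1 + q * s) ^ (-y)) 0
      = ((m.choose k : ℕ) : ℝ) * ff y k * (q ^ (m-k) * ff (-y) (m-k)) := by
    intro k _
    rw [iteratedDeriv_rpow_aux 1 y k 0 (by norm_num),
      iteratedDeriv_rpow_aux q (-y) (m-k) 0 (by norm_num)]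
    simp [Real.one_rpow]
  rw [Finset.sum_congr rfl hterm, br]
  rw [← Finset.sum_range_reflect
    (fun k => (m.choose k : ℝ) * q ^ k * ff y (m - k) * ff (-y) k) (m+1)]
  apply Finset.sum_congr rfl
  intro k hk
  have hk' : k ≤ m := Nat.lt_succ_iff.mp (mem_range.mp hk)
  rw [Nat.add_sub_cancel]
  rw [Nat.choose_symm hk', Nat.sub_sub_self hk']
  ring


theorem stmt9 (lam β p q r : ℝ) (hlam : lam < 0) (hβ : 0 < β)
    (hp : 0 < p) (hp1 : p < 1) (hq : q = 1 - p) (hr : 0 < r) (n : ℕ) (x y : ℝ) :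
    K lam β q r n (x + y)
      = ∑ k ∈ Finset.range (n + 1),
          (n.choose k : ℝ) * K lam β q r k x * br q y (n - k) := by
  have hU1 : IsOpen {t : ℝ | 0 < 1 + t} := isOpen_lt continuous_const (by continuity)
  have hU2 : IsOpen {t : ℝ | 0 < 1 + q * t} := isOpen_lt continuous_const (by continuity)
  have hU3 : IsOpen ({t : ℝ | 0 < 1 + q * t} ∩
      (fun t : ℝ => 1 + lam * r * Real.log (1 + q * t)) ⁻¹' Set.Ioi 0) := by
    apply ContinuousOn.isOpen_inter_preimage _ hU2 isOpen_Ioi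
    apply ContinuousOn.add continuousOn_const
    apply ContinuousOn.mul continuousOn_const
    apply Real.continuousOn_log.comp
      (continuousOn_const.add (continuousOn_const.mul continuousOn_id))
    intro t ht
    exact ne_of_gt ht
  set V : Set ℝ := ({t : ℝ | 0 < 1 + t} ∩ {t : ℝ | 0 < 1 + q * t}) ∩
      ({t : ℝ | 0 < 1 + q * t} ∩
        (fun t : ℝ => 1 + lam * r * Real.log (1 + q * t)) ⁻¹' Set.Ioi 0) with hVdef
  have hV : IsOpen V := ((hU1.inter hU2).inter hU3)
  have h0 : (0:ℝ) ∈ V := by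
    refine ⟨⟨by norm_num, by norm_num⟩, by norm_num, ?_⟩
    simp [Set.mem_preimage, Real.log_one]
  -- facts on V
  have hVpos : ∀ t ∈ V, 0 < 1 + t ∧ 0 < 1 + q * t ∧
      0 < 1 + lam * r * Real.log (1 + q * t) := by
    rintro t ⟨⟨h1, h2⟩, -, h3⟩
    exact ⟨h1, h2, h3⟩
  -- smoothness of the base
  have hbase : ContDiffOn ℝ (⊤ : ℕ∞) (fun t : ℝ => (1 + t) / (1 + q * t)) V := by
    apply ContDiffOn.div
    · exact (contDiff_const.add contDiff_id).contDiffOn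
    · exact (contDiff_const.add (contDiff_const.mul contDiff_id)).contDiffOn
    · exact fun t ht => ne_of_gt (hVpos t ht).2.1
  have hbasepos : ∀ t ∈ V, 0 < (1 + t) / (1 + q * t) :=
    fun t ht => div_pos (hVpos t ht).1 (hVpos t ht).2.1
  have hΦ : ∀ z : ℝ, ContDiffOn ℝ (⊤ : ℕ∞)
      (fun t : ℝ => ((1 + t) / (1 + q * t)) ^ z *
        (1 + lam * r * Real.log (1 + q * t)) ^ (-β / lam)) V := by
    intro z
    apply ContDiffOn.mul
    · exact hbase.rpow_const_of_ne (fun t ht => ne_of_gt (hbasepos t ht))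
    · apply ContDiffOn.rpow_const_of_ne
      · apply ContDiffOn.add contDiffOn_const
        apply ContDiffOn.mul contDiffOn_const
        apply ContDiffOn.log
        · exact (contDiff_const.add (contDiff_const.mul contDiff_id)).contDiffOn
        · exact fun t ht => ne_of_gt (hVpos t ht).2.1
      · exact fun t ht => ne_of_gt (hVpos t ht).2.2
  have hG : ContDiffOn ℝ (⊤ : ℕ∞) (fun t : ℝ => ((1 + t) / (1 + q * t)) ^ y) V :=
    hbase.rpow_const_of_ne (fun t ht => ne_of_gt (hbasepos t ht))
  have hev : (fun t : ℝ => ((1 + t) / (1 + q * t)) ^ (x + y) *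
        (1 + lam * r * Real.log (1 + q * t)) ^ (-β / lam)) =ᶠ[nhds 0]
      fun t => (fun s : ℝ => ((1 + s) / (1 + q * s)) ^ x *
          (1 + lam * r * Real.log (1 + q * s)) ^ (-β / lam)) t *
        (fun s : ℝ => ((1 + s) / (1 + q * s)) ^ y) t := by
    refine Filter.eventually_of_mem (hV.mem_nhds h0) ?_
    intro t ht
    simp only
    rw [Real.rpow_add (hbasepos t ht)]
    ring
  rw [K, hev.iteratedDeriv_eq, leibniz' hV (hΦ x) hG n 0 h0]
  apply Finset.sum_congr rfl
  intro k hk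
  rw [iteratedDeriv_G]
  rfl
end

section
/- For every n ∈ ℕ and every real x, P^{(β)}_{n,λ}(x) = Σ_{k=0}^n C(n,k) · [ Σ_{i=0}^{n−k} (−1)^i i! · B_{n−k,i}(M_λ(1), …, M_λ(n−k−i+1)) ] · x^k. -/
open Finset

/-- degenerate Appell polynomials -/
noncomputable def P (lam β p q r : ℝ) (n : ℕ) (x : ℝ) : ℝ :=
  iteratedDeriv n
    (fun z : ℝ => Real.exp (x * z) *
      (1 + lam * r * Real.log (p / (1 - q * Real.exp z))) ^ (-β / lam)) 0

/-- moments of the degenerate Pascal measure -/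
noncomputable def M (lam β p q r : ℝ) (j : ℕ) : ℝ :=
  iteratedDeriv j
    (fun z : ℝ => (1 + lam * r * Real.log (p / (1 - q * Real.exp z))) ^ (β / lam)) 0

/-- partial exponential Bell polynomials -/
noncomputable def Bell (n k : ℕ) (x : ℕ → ℝ) : ℝ :=
  ∑ i ∈ (Fintype.piFinset fun _ : Fin (n - k + 1) => Finset.range (n + 1)).filter
      (fun i => (∑ j : Fin (n - k + 1), i j) = k ∧ (∑ j : Fin (n - k + 1), ((j : ℕ) + 1) * i j) = n),
    (n.factorial : ℝ) / (∏ j : Fin (n - k + 1), ((i j).factorial : ℝ)) *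
      ∏ j : Fin (n - k + 1), (x ((j : ℕ) + 1) / (((j : ℕ) + 1).factorial : ℝ)) ^ i j


noncomputable def daVs (x : ℕ → ℝ) : PowerSeries ℝ :=
  PowerSeries.mk fun j => if j = 0 then 0 else x j / j.factorial

noncomputable def daW (L n k : ℕ) (x : ℕ → ℝ) : ℝ :=
  ∑ i ∈ (Fintype.piFinset fun _ : Fin L => Finset.range (n + 1)).filter
      (fun i => (∑ j : Fin L, i j) = k ∧ (∑ j : Fin L, ((j : ℕ) + 1) * i j) = n),
    (∏ j : Fin L, ((i j).factorial : ℝ))⁻¹ *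
      ∏ j : Fin L, (x ((j : ℕ) + 1) / (((j : ℕ) + 1).factorial : ℝ)) ^ i j

lemma daPadSum {Mo : Type*} [AddCommMonoid Mo] {L L' : ℕ} (h : L ≤ L') (g : ℕ → Mo)
    (hg : ∀ m, L ≤ m → g m = 0) : ∑ j : Fin L', g j = ∑ j : Fin L, g j := by
  rw [Fin.sum_univ_eq_sum_range, Fin.sum_univ_eq_sum_range]
  exact (Finset.sum_subset (Finset.range_subset_range.2 h)
    (fun m _ hm => hg m (by simpa using hm))).symm

lemma daPadProd {L L' : ℕ} (h : L ≤ L') (g : ℕ → ℝ)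
    (hg : ∀ m, L ≤ m → g m = 1) : ∏ j : Fin L', g j = ∏ j : Fin L, g j := by
  rw [Fin.prod_univ_eq_prod_range, Fin.prod_univ_eq_prod_range]
  exact (Finset.prod_subset (Finset.range_subset_range.2 h)
    (fun m _ hm => hg m (by simpa using hm))).symm

lemma daSumPad {Mo : Type*} [AddCommMonoid Mo] {L L' : ℕ} (h : L ≤ L') (F : ℕ → ℕ → Mo)
    (hF : ∀ m, F m 0 = 0) (v : Fin L → ℕ) :
    (∑ j : Fin L', F (j : ℕ) (if hj : (j : ℕ) < L then v ⟨(j : ℕ), hj⟩ else 0))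
      = ∑ j : Fin L, F (j : ℕ) (v j) := by
  rw [daPadSum h (fun m => F m (if hm : m < L then v ⟨m, hm⟩ else 0))
    (fun m hm => by rw [dif_neg (Nat.not_lt.2 hm)]; exact hF m)]
  exact Finset.sum_congr rfl fun j _ => by rw [dif_pos j.2]

lemma daProdPad {L L' : ℕ} (h : L ≤ L') (F : ℕ → ℕ → ℝ)
    (hF : ∀ m, F m 0 = 1) (v : Fin L → ℕ) :
    (∏ j : Fin L', F (j : ℕ) (if hj : (j : ℕ) < L then v ⟨(j : ℕ), hj⟩ else 0))
      = ∏ j : Fin L, F (j : ℕ) (v j) := by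
  rw [daPadProd h (fun m => F m (if hm : m < L then v ⟨m, hm⟩ else 0))
    (fun m hm => by rw [dif_neg (Nat.not_lt.2 hm)]; exact hF m)]
  exact Finset.prod_congr rfl fun j _ => by rw [dif_pos j.2]

lemma daForcedZero {L' n k L : ℕ} (hn : n < L + k) (i : Fin L' → ℕ)
    (h1 : (∑ j : Fin L', i j) = k) (h2 : (∑ j : Fin L', ((j : ℕ) + 1) * i j) = n)
    (j : Fin L') (hj : L ≤ (j : ℕ)) : i j = 0 := by
  by_contra hij
  have hij1 : 1 ≤ i j := Nat.one_le_iff_ne_zero.2 hij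
  have e1 : (∑ t : Fin L', ((t : ℕ) + 1) * i t)
      = (∑ t : Fin L', i t) + ∑ t : Fin L', (t : ℕ) * i t := by
    rw [← Finset.sum_add_distrib]; exact Finset.sum_congr rfl fun t _ => by ring
  have e2 : (j : ℕ) * i j ≤ ∑ t : Fin L', (t : ℕ) * i t :=
    Finset.single_le_sum (f := fun t : Fin L' => (t : ℕ) * i t)
      (fun t _ => Nat.zero_le _) (Finset.mem_univ j)
  have e3 : L ≤ (j : ℕ) * i j := le_trans (Nat.le_mul_of_pos_right _ hij1) (Nat.mul_le_mul_right _ hj)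
  omega

lemma daSumTrunc {Mo : Type*} [AddCommMonoid Mo] {L L' : ℕ} (h : L ≤ L') (F : ℕ → ℕ → Mo)
    (hF : ∀ m, F m 0 = 0) (v : Fin L' → ℕ) (hz : ∀ j : Fin L', L ≤ (j : ℕ) → v j = 0) :
    (∑ j : Fin L, F (j : ℕ) (v ⟨(j : ℕ), lt_of_lt_of_le j.2 h⟩)) = ∑ j : Fin L', F (j : ℕ) (v j) := by
  have daKey : (∑ j : Fin L', F (j : ℕ) (if hj : (j : ℕ) < L then (fun t : Fin L => v ⟨(t : ℕ), lt_of_lt_of_le t.2 h⟩) ⟨(j : ℕ), hj⟩ else 0))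
      = ∑ j : Fin L, F (j : ℕ) (v ⟨(j : ℕ), lt_of_lt_of_le j.2 h⟩) := daSumPad h F hF (fun t : Fin L => v ⟨(t : ℕ), lt_of_lt_of_le t.2 h⟩)
  rw [← daKey]
  refine Finset.sum_congr rfl fun j _ => ?_
  by_cases hj : (j : ℕ) < L
  · rw [dif_pos hj]
  · rw [dif_neg hj, hz j (Nat.not_lt.1 hj)]

lemma daProdTrunc {L L' : ℕ} (h : L ≤ L') (F : ℕ → ℕ → ℝ)
    (hF : ∀ m, F m 0 = 1) (v : Fin L' → ℕ) (hz : ∀ j : Fin L', L ≤ (j : ℕ) → v j = 0) :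
    (∏ j : Fin L, F (j : ℕ) (v ⟨(j : ℕ), lt_of_lt_of_le j.2 h⟩)) = ∏ j : Fin L', F (j : ℕ) (v j) := by
  have daKey : (∏ j : Fin L', F (j : ℕ) (if hj : (j : ℕ) < L then (fun t : Fin L => v ⟨(t : ℕ), lt_of_lt_of_le t.2 h⟩) ⟨(j : ℕ), hj⟩ else 0))
      = ∏ j : Fin L, F (j : ℕ) (v ⟨(j : ℕ), lt_of_lt_of_le j.2 h⟩) := daProdPad h F hF (fun t : Fin L => v ⟨(t : ℕ), lt_of_lt_of_le t.2 h⟩)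
  rw [← daKey]
  refine Finset.prod_congr rfl fun j _ => ?_
  by_cases hj : (j : ℕ) < L
  · rw [dif_pos hj]
  · rw [dif_neg hj, hz j (Nat.not_lt.1 hj)]

lemma W_len {x : ℕ → ℝ} {L L' n k : ℕ} (h : L ≤ L') (hn : n < L + k) :
    daW L n k x = daW L' n k x := by
  unfold daW
  refine Finset.sum_nbij'
    (i := fun v (j : Fin L') => if hj : (j : ℕ) < L then v ⟨(j : ℕ), hj⟩ else 0)
    (j := fun v (j : Fin L) => v ⟨(j : ℕ), lt_of_lt_of_le j.2 h⟩) ?_ ?_ ?_ ?_ ?_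
  · intro v hv
    simp only [Finset.mem_filter, Fintype.mem_piFinset] at hv ⊢
    obtain ⟨hmem, hs, hw⟩ := hv
    refine ⟨fun j => ?_, ?_, ?_⟩
    · by_cases hj : (j : ℕ) < L
      · simpa [hj] using hmem ⟨(j : ℕ), hj⟩
      · rw [dif_neg hj]; exact Finset.mem_range.2 (Nat.succ_pos n)
    · rw [daSumPad h (fun _ c => c) (fun _ => rfl) v]; exact hs
    · rw [daSumPad h (fun m c => (m + 1) * c) (fun m => by ring) v]; exact hw
  · intro v hv
    simp only [Finset.mem_filter, Fintype.mem_piFinset] at hv ⊢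
    obtain ⟨hmem, hs, hw⟩ := hv
    have hz : ∀ j : Fin L', L ≤ (j : ℕ) → v j = 0 := daForcedZero hn v hs hw
    refine ⟨fun j => hmem _, ?_, ?_⟩
    · rw [daSumTrunc h (fun _ c => c) (fun _ => rfl) v hz]; exact hs
    · rw [daSumTrunc h (fun m c => (m + 1) * c) (fun m => by ring) v hz]; exact hw
  · intro v _
    funext j
    dsimp only
    rw [dif_pos j.2]
  · intro v hv
    simp only [Finset.mem_filter, Fintype.mem_piFinset] at hv
    obtain ⟨hmem, hs, hw⟩ := hv
    have hz : ∀ j : Fin L', L ≤ (j : ℕ) → v j = 0 := daForcedZero hn v hs hw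
    funext j
    dsimp only
    by_cases hj : (j : ℕ) < L
    · rw [dif_pos hj]
    · rw [dif_neg hj]; exact (hz j (Nat.not_lt.1 hj)).symm
  · intro v hv
    rw [← daProdPad h (fun m c => ((c.factorial : ℝ))) (fun m => by simp) v,
      ← daProdPad h (fun m c => (x (m + 1) / ((m + 1).factorial : ℝ)) ^ c) (fun m => by simp) v]

lemma daSumUpdateSplit {ι : Type*} [Fintype ι] [DecidableEq ι] {Mo : Type*} [AddCommMonoid Mo]
    (jj : ι) (F : ι → ℕ → Mo) (i : ι → ℕ) (v : ℕ) :
    ∑ t : ι, F t (Function.update i jj v t) = F jj v + ∑ t ∈ Finset.univ.erase jj, F t (i t) := by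
  rw [← Finset.add_sum_erase _ (fun t => F t (Function.update i jj v t)) (Finset.mem_univ jj),
    Function.update_self]
  congr 1
  exact Finset.sum_congr rfl fun t ht => by
    rw [Function.update_of_ne (Finset.mem_erase.1 ht).1]

lemma daSumSplit {ι : Type*} [Fintype ι] [DecidableEq ι] {Mo : Type*} [AddCommMonoid Mo]
    (jj : ι) (F : ι → ℕ → Mo) (i : ι → ℕ) :
    ∑ t : ι, F t (i t) = F jj (i jj) + ∑ t ∈ Finset.univ.erase jj, F t (i t) :=
  (Finset.add_sum_erase _ (fun t => F t (i t)) (Finset.mem_univ jj)).symm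

lemma daProdUpdateSplit {ι : Type*} [Fintype ι] [DecidableEq ι]
    (jj : ι) (F : ι → ℕ → ℝ) (i : ι → ℕ) (v : ℕ) :
    ∏ t : ι, F t (Function.update i jj v t) = F jj v * ∏ t ∈ Finset.univ.erase jj, F t (i t) := by
  rw [← Finset.mul_prod_erase _ (fun t => F t (Function.update i jj v t)) (Finset.mem_univ jj),
    Function.update_self]
  congr 1
  exact Finset.prod_congr rfl fun t ht => by
    rw [Function.update_of_ne (Finset.mem_erase.1 ht).1]

lemma daProdSplit {ι : Type*} [Fintype ι] [DecidableEq ι]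
    (jj : ι) (F : ι → ℕ → ℝ) (i : ι → ℕ) :
    ∏ t : ι, F t (i t) = F jj (i jj) * ∏ t ∈ Finset.univ.erase jj, F t (i t) :=
  (Finset.mul_prod_erase _ (fun t => F t (i t)) (Finset.mem_univ jj)).symm

lemma daSumLeWeight {L : ℕ} (i : Fin L → ℕ) :
    (∑ j : Fin L, i j) ≤ ∑ j : Fin L, ((j : ℕ) + 1) * i j :=
  Finset.sum_le_sum fun j _ => Nat.le_mul_of_pos_left (i j) (Nat.succ_pos _)

lemma W_eq_zero_of_lt {L n k : ℕ} (h : n < k) (x : ℕ → ℝ) : daW L n k x = 0 := by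
  unfold daW
  refine Finset.sum_eq_zero fun i hi => ?_
  simp only [Finset.mem_filter] at hi
  exact absurd (hi.2.1 ▸ hi.2.2 ▸ daSumLeWeight i) (by omega)

lemma W_k_zero (L n : ℕ) (x : ℕ → ℝ) : daW L n 0 x = if n = 0 then 1 else 0 := by
  unfold daW
  have hmem : ∀ i : Fin L → ℕ, (∑ j : Fin L, i j) = 0 → i = fun _ => 0 := fun i hi =>
    funext fun j => (Finset.sum_eq_zero_iff.1 hi) j (Finset.mem_univ j)
  by_cases hn : n = 0
  · subst hn
    rw [show (Fintype.piFinset fun _ : Fin L => Finset.range (0 + 1)).filter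
        (fun i => (∑ j : Fin L, i j) = 0 ∧ (∑ j : Fin L, ((j : ℕ) + 1) * i j) = 0)
        = {fun _ => 0} from ?_]
    · simp
    · ext i
      simp only [Finset.mem_filter, Fintype.mem_piFinset, Finset.mem_singleton, Finset.mem_range]
      constructor
      · rintro ⟨-, hs, -⟩; exact hmem i hs
      · rintro rfl; simp
  · rw [if_neg hn]
    refine Finset.sum_eq_zero fun i hi => ?_
    simp only [Finset.mem_filter] at hi
    obtain ⟨-, hs, hw⟩ := hi
    rw [hmem i hs] at hw
    simp at hw
    exact absurd hw.symm hn

lemma daCrux (x : ℕ → ℝ) (n k : ℕ) (jj : Fin (n + 1)) (hjn : (jj : ℕ) < n) :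
    (∑ i ∈ (Fintype.piFinset fun _ : Fin (n + 1) => Finset.range (n + 1)).filter
        (fun i => (∑ j : Fin (n + 1), i j) = k + 1 ∧ (∑ j : Fin (n + 1), ((j : ℕ) + 1) * i j) = n),
      ((i jj : ℝ)) * ((∏ j : Fin (n + 1), ((i j).factorial : ℝ))⁻¹ *
        ∏ j : Fin (n + 1), (x ((j : ℕ) + 1) / (((j : ℕ) + 1).factorial : ℝ)) ^ i j))
    = (x ((jj : ℕ) + 1) / (((jj : ℕ) + 1).factorial : ℝ)) * daW (n + 1) (n - ((jj : ℕ) + 1)) k x := by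
  set a : ℕ := (jj : ℕ) + 1 with ha
  set n' : ℕ := n - a with hn'
  have han : a ≤ n := hjn
  have hn'a : n' + a = n := Nat.sub_add_cancel han
  -- restrict to i jj ≠ 0
  rw [← Finset.sum_filter_of_ne (p := fun i : Fin (n+1) → ℕ => i jj ≠ 0)
    (fun i _ hne => fun h0 => hne (by rw [h0]; simp))]
  rw [daW, Finset.mul_sum]
  refine Finset.sum_nbij'
    (i := fun v => Function.update v jj (v jj - 1))
    (j := fun v => Function.update v jj (v jj + 1)) ?_ ?_ ?_ ?_ ?_
  · -- forward membership
    intro v hv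
    simp only [Finset.mem_filter, Fintype.mem_piFinset, Finset.mem_range] at hv ⊢
    obtain ⟨⟨hmem, hs, hw⟩, hne⟩ := hv
    obtain ⟨m, hm⟩ := Nat.exists_eq_succ_of_ne_zero hne
    have hsplit_s : (∑ t : Fin (n+1), v t) = v jj + ∑ t ∈ Finset.univ.erase jj, v t :=
      daSumSplit jj (fun _ c => c) v
    have hsplit_w : (∑ t : Fin (n+1), ((t : ℕ) + 1) * v t)
        = a * v jj + ∑ t ∈ Finset.univ.erase jj, ((t : ℕ) + 1) * v t :=
      daSumSplit jj (fun t c => ((t : ℕ) + 1) * c) v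
    have hus : (∑ t : Fin (n+1), Function.update v jj (v jj - 1) t)
        = (v jj - 1) + ∑ t ∈ Finset.univ.erase jj, v t :=
      daSumUpdateSplit jj (fun _ c => c) v _
    have huw : (∑ t : Fin (n+1), ((t : ℕ) + 1) * Function.update v jj (v jj - 1) t)
        = a * (v jj - 1) + ∑ t ∈ Finset.univ.erase jj, ((t : ℕ) + 1) * v t :=
      daSumUpdateSplit jj (fun t c => ((t : ℕ) + 1) * c) v _
    have hsum : (∑ t : Fin (n+1), Function.update v jj (v jj - 1) t) = k := by omega
    have hwt : (∑ t : Fin (n+1), ((t : ℕ) + 1) * Function.update v jj (v jj - 1) t) = n' := by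
      rw [huw, hm, Nat.succ_sub_one]
      rw [hsplit_w, hm, Nat.mul_succ] at hw
      omega
    refine ⟨fun t => ?_, hsum, hwt⟩
    have hle : Function.update v jj (v jj - 1) t ≤ k :=
      hsum ▸ Finset.single_le_sum (f := fun t => Function.update v jj (v jj - 1) t)
        (fun _ _ => Nat.zero_le _) (Finset.mem_univ t)
    have hkn' : k ≤ n' := hwt ▸ hsum ▸ daSumLeWeight _
    omega
  · -- backward membership
    intro v hv
    simp only [Finset.mem_filter, Fintype.mem_piFinset, Finset.mem_range] at hv ⊢
    obtain ⟨hmem, hs, hw⟩ := hv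
    have hsplit_s : (∑ t : Fin (n+1), v t) = v jj + ∑ t ∈ Finset.univ.erase jj, v t :=
      daSumSplit jj (fun _ c => c) v
    have hsplit_w : (∑ t : Fin (n+1), ((t : ℕ) + 1) * v t)
        = a * v jj + ∑ t ∈ Finset.univ.erase jj, ((t : ℕ) + 1) * v t :=
      daSumSplit jj (fun t c => ((t : ℕ) + 1) * c) v
    have hus : (∑ t : Fin (n+1), Function.update v jj (v jj + 1) t)
        = (v jj + 1) + ∑ t ∈ Finset.univ.erase jj, v t :=
      daSumUpdateSplit jj (fun _ c => c) v _
    have huw : (∑ t : Fin (n+1), ((t : ℕ) + 1) * Function.update v jj (v jj + 1) t)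
        = a * (v jj + 1) + ∑ t ∈ Finset.univ.erase jj, ((t : ℕ) + 1) * v t :=
      daSumUpdateSplit jj (fun t c => ((t : ℕ) + 1) * c) v _
    have hsum : (∑ t : Fin (n+1), Function.update v jj (v jj + 1) t) = k + 1 := by omega
    have hwt : (∑ t : Fin (n+1), ((t : ℕ) + 1) * Function.update v jj (v jj + 1) t) = n := by
      rw [huw, Nat.mul_succ]
      rw [hsplit_w] at hw
      omega
    have hkn' : k ≤ n' := hw ▸ hs ▸ daSumLeWeight v
    refine ⟨⟨fun t => ?_, hsum, hwt⟩, ?_⟩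
    · have hle : Function.update v jj (v jj + 1) t ≤ k + 1 :=
        hsum ▸ Finset.single_le_sum (f := fun t => Function.update v jj (v jj + 1) t)
          (fun _ _ => Nat.zero_le _) (Finset.mem_univ t)
      omega
    · simp [Function.update_self]
  · intro v hv
    simp only [Finset.mem_filter] at hv
    have hne := hv.2
    funext t
    by_cases ht : t = jj
    · subst ht; simp [Function.update_self]; omega
    · simp [Function.update_of_ne ht]
  · intro v hv
    funext t
    by_cases ht : t = jj
    · subst ht; simp [Function.update_self]
    · simp [Function.update_of_ne ht]
  · -- term equality
    intro v hv
    simp only [Finset.mem_filter, Fintype.mem_piFinset, Finset.mem_range] at hv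
    obtain ⟨⟨hmem, hs, hw⟩, hne⟩ := hv
    obtain ⟨m, hm⟩ := Nat.exists_eq_succ_of_ne_zero hne
    have hpf : (∏ t : Fin (n+1), ((v t).factorial : ℝ))
        = ((v jj).factorial : ℝ) * ∏ t ∈ Finset.univ.erase jj, ((v t).factorial : ℝ) :=
      daProdSplit jj (fun _ c => ((c.factorial : ℕ) : ℝ)) v
    have hpy : (∏ t : Fin (n+1), (x ((t : ℕ) + 1) / (((t : ℕ) + 1).factorial : ℝ)) ^ v t)
        = (x a / (a.factorial : ℝ)) ^ v jj *
          ∏ t ∈ Finset.univ.erase jj, (x ((t : ℕ) + 1) / (((t : ℕ) + 1).factorial : ℝ)) ^ v t :=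
      daProdSplit jj (fun t c => (x ((t : ℕ) + 1) / (((t : ℕ) + 1).factorial : ℝ)) ^ c) v
    have hupf : (∏ t : Fin (n+1), ((Function.update v jj (v jj - 1) t).factorial : ℝ))
        = (((v jj - 1).factorial : ℕ) : ℝ) * ∏ t ∈ Finset.univ.erase jj, ((v t).factorial : ℝ) :=
      daProdUpdateSplit jj (fun _ c => ((c.factorial : ℕ) : ℝ)) v _
    have hupy : (∏ t : Fin (n+1), (x ((t : ℕ) + 1) / (((t : ℕ) + 1).factorial : ℝ)) ^ Function.update v jj (v jj - 1) t)
        = (x a / (a.factorial : ℝ)) ^ (v jj - 1) *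
          ∏ t ∈ Finset.univ.erase jj, (x ((t : ℕ) + 1) / (((t : ℕ) + 1).factorial : ℝ)) ^ v t :=
      daProdUpdateSplit jj (fun t c => (x ((t : ℕ) + 1) / (((t : ℕ) + 1).factorial : ℝ)) ^ c) v _
    rw [hpf, hpy, hupf, hupy, hm, Nat.succ_sub_one]
    have hPfne : (∏ t ∈ Finset.univ.erase jj, ((v t).factorial : ℝ)) ≠ 0 :=
      Finset.prod_ne_zero_iff.2 fun t _ => Nat.cast_ne_zero.2 (Nat.factorial_ne_zero _)
    have hfm : ((m + 1).factorial : ℝ) = (m + 1) * (m.factorial : ℝ) := by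
      rw [Nat.factorial_succ]; push_cast; ring
    have hym : (x a / (a.factorial : ℝ)) ^ (m + 1)
        = (x a / (a.factorial : ℝ)) * (x a / (a.factorial : ℝ)) ^ m := by
      rw [pow_succ]; ring
    rw [hfm, hym]
    have hmne : ((m : ℝ) + 1) ≠ 0 := by positivity
    have hmfne : ((m.factorial : ℕ) : ℝ) ≠ 0 := Nat.cast_ne_zero.2 (Nat.factorial_ne_zero _)
    push_cast
    field_simp

lemma daKey (x : ℕ → ℝ) (n k : ℕ) :
    ∑ a ∈ Finset.range (n + 1),
        (if a = 0 then (0 : ℝ) else x a / a.factorial) * daW (n + 1) (n - a) k x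
      = (k + 1 : ℝ) * daW (n + 1) n (k + 1) x := by
  conv_rhs => rw [daW, Finset.mul_sum]
  have step1 : ∀ i ∈ (Fintype.piFinset fun _ : Fin (n + 1) => Finset.range (n + 1)).filter
      (fun i => (∑ j : Fin (n + 1), i j) = k + 1 ∧ (∑ j : Fin (n + 1), ((j : ℕ) + 1) * i j) = n),
      (k + 1 : ℝ) * ((∏ j : Fin (n + 1), ((i j).factorial : ℝ))⁻¹ *
        ∏ j : Fin (n + 1), (x ((j : ℕ) + 1) / (((j : ℕ) + 1).factorial : ℝ)) ^ i j)
      = ∑ jj : Fin (n + 1), (i jj : ℝ) * ((∏ j : Fin (n + 1), ((i j).factorial : ℝ))⁻¹ *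
          ∏ j : Fin (n + 1), (x ((j : ℕ) + 1) / (((j : ℕ) + 1).factorial : ℝ)) ^ i j) := by
    intro i hi
    simp only [Finset.mem_filter] at hi
    rw [← Finset.sum_mul]
    congr 1
    exact_mod_cast hi.2.1.symm
  rw [Finset.sum_congr rfl step1, Finset.sum_comm]
  rw [Fin.sum_univ_castSucc]
  have hlast : (∑ i ∈ (Fintype.piFinset fun _ : Fin (n + 1) => Finset.range (n + 1)).filter
      (fun i => (∑ j : Fin (n + 1), i j) = k + 1 ∧ (∑ j : Fin (n + 1), ((j : ℕ) + 1) * i j) = n),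
      ((i (Fin.last n) : ℝ)) * ((∏ j : Fin (n + 1), ((i j).factorial : ℝ))⁻¹ *
        ∏ j : Fin (n + 1), (x ((j : ℕ) + 1) / (((j : ℕ) + 1).factorial : ℝ)) ^ i j)) = 0 := by
    refine Finset.sum_eq_zero fun i hi => ?_
    simp only [Finset.mem_filter] at hi
    have : i (Fin.last n) = 0 :=
      daForcedZero (L := n) (by omega) i hi.2.1 hi.2.2 (Fin.last n) (by simp)
    rw [this]; simp
  rw [hlast, add_zero]
  rw [Finset.sum_range_succ']
  have h0 : (if (0 : ℕ) = 0 then (0 : ℝ) else x 0 / (Nat.factorial 0 : ℝ)) * daW (n + 1) (n - 0) k x = 0 := by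
    simp
  rw [h0, add_zero]
  rw [← Fin.sum_univ_eq_sum_range
    (fun a => (if a + 1 = 0 then (0 : ℝ) else x (a + 1) / ((a + 1).factorial : ℝ))
      * daW (n + 1) (n - (a + 1)) k x) n]
  refine Finset.sum_congr rfl fun j _ => ?_
  rw [if_neg (Nat.succ_ne_zero _)]
  have := (daCrux x n k (Fin.castSucc j) (by simpa [Fin.coe_castSucc] using j.2)).symm
  simpa [Fin.coe_castSucc] using this

lemma daCoeffVPow (x : ℕ → ℝ) : ∀ (k n : ℕ),
    PowerSeries.coeff n ((daVs x) ^ k) = k.factorial * daW (n + 1) n k x := by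
  intro k
  induction k with
  | zero =>
    intro n
    rw [pow_zero, PowerSeries.coeff_one, W_k_zero]
    by_cases hn : n = 0 <;> simp [hn]
  | succ k ih =>
    intro n
    rw [pow_succ', PowerSeries.coeff_mul, Finset.Nat.sum_antidiagonal_eq_sum_range_succ_mk]
    have step : ∀ a ∈ Finset.range (n + 1),
        PowerSeries.coeff a (daVs x) * PowerSeries.coeff (n - a) ((daVs x) ^ k)
        = (k.factorial : ℝ) * ((if a = 0 then (0 : ℝ) else x a / a.factorial) * daW (n + 1) (n - a) k x) := by
      intro a _
      rw [ih (n - a), daVs, PowerSeries.coeff_mk]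
      rw [W_len (x := x) (L := n - a + 1) (L' := n + 1) (by omega) (by omega)]
      ring
    rw [Finset.sum_congr rfl step, ← Finset.mul_sum, daKey]
    rw [Nat.factorial_succ]
    push_cast
    ring

lemma daBellEqW (m i : ℕ) (x : ℕ → ℝ) :
    Bell m i x = (m.factorial : ℝ) * daW (m - i + 1) m i x := by
  unfold Bell daW
  rw [Finset.mul_sum]
  exact Finset.sum_congr rfl fun v _ => by rw [div_eq_mul_inv]; ring

lemma daBellCoeff (m i : ℕ) (x : ℕ → ℝ) :
    (i.factorial : ℝ) * Bell m i x = (m.factorial : ℝ) * PowerSeries.coeff m ((daVs x) ^ i) := by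
  rw [daBellEqW, daCoeffVPow,
    W_len (x := x) (L := m - i + 1) (L' := m + 1) (by omega) (by omega)]
  ring

lemma coeff_V_pow_zero {x : ℕ → ℝ} {m i : ℕ} (h : m < i) :
    PowerSeries.coeff m ((daVs x) ^ i) = 0 := by
  rw [daCoeffVPow, W_eq_zero_of_lt h]; ring

lemma daCoeffNegPow (x : ℕ → ℝ) (m i : ℕ) :
    PowerSeries.coeff m ((- daVs x) ^ i) = (-1 : ℝ) ^ i * PowerSeries.coeff m ((daVs x) ^ i) := by
  rw [neg_pow]
  have : ((-1 : PowerSeries ℝ) ^ i) = PowerSeries.C ((-1 : ℝ) ^ i) := by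
    rw [map_pow, map_neg, map_one]
  rw [this, PowerSeries.coeff_C_mul]

lemma daCseqCoeff (Mx : ℕ → ℝ) (N m : ℕ) (hm : m < N) :
    (∑ i ∈ Finset.range (m + 1), (-1 : ℝ) ^ i * i.factorial * Bell m i Mx)
      = (m.factorial : ℝ) * PowerSeries.coeff m (∑ i ∈ Finset.range N, (- daVs Mx) ^ i) := by
  have h1 : ∀ i, (-1 : ℝ) ^ i * i.factorial * Bell m i Mx
      = (m.factorial : ℝ) * PowerSeries.coeff m ((- daVs Mx) ^ i) := by
    intro i
    rw [daCoeffNegPow, mul_assoc, daBellCoeff]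
    ring
  rw [Finset.sum_congr rfl fun i _ => h1 i]
  rw [Finset.sum_subset (Finset.range_subset_range.2 hm)
    (fun i _ hi => by
      rw [daCoeffNegPow, coeff_V_pow_zero (show m < i by simp at hi; omega)]
      ring)]
  rw [map_sum, Finset.mul_sum]

lemma daGeomPart (Mx : ℕ → ℝ) (n : ℕ) (hn : n ≠ 0) :
    PowerSeries.coeff n ((∑ i ∈ Finset.range (n + 1), (- daVs Mx) ^ i) * (1 + daVs Mx)) = 0 := by
  have hgeom : (∑ i ∈ Finset.range (n + 1), (- daVs Mx) ^ i) * (1 + daVs Mx)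
      = 1 - (- daVs Mx) ^ (n + 1) := by
    have h := geom_sum_mul (- daVs Mx) (n + 1)
    have h2 : (1 + daVs Mx) = -((- daVs Mx) - 1) := by ring
    rw [h2, mul_neg, h]; ring
  rw [hgeom, map_sub, PowerSeries.coeff_one, if_neg hn, daCoeffNegPow,
    coeff_V_pow_zero (Nat.lt_succ_self n)]
  ring

lemma daMainComb (Mx : ℕ → ℝ) (hM0 : Mx 0 = 1) (n : ℕ) (hn : n ≠ 0) :
    ∑ k ∈ Finset.range (n + 1), (n.choose k : ℝ) *
      (∑ i ∈ Finset.range (k + 1), (-1 : ℝ) ^ i * i.factorial * Bell k i Mx) * Mx (n - k) = 0 := by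
  have hG : ∀ m : ℕ, Mx m = (m.factorial : ℝ) * PowerSeries.coeff m (1 + daVs Mx) := by
    intro m
    rw [map_add, PowerSeries.coeff_one, daVs, PowerSeries.coeff_mk]
    cases m with
    | zero => simp [hM0]
    | succ m' =>
      rw [if_neg (Nat.succ_ne_zero m'), if_neg (Nat.succ_ne_zero m'), zero_add]
      rw [mul_div_cancel₀]
      exact Nat.cast_ne_zero.2 (Nat.factorial_ne_zero _)
  have hstep : ∀ k ∈ Finset.range (n + 1),
      (n.choose k : ℝ) * (∑ i ∈ Finset.range (k + 1), (-1 : ℝ) ^ i * i.factorial * Bell k i Mx)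
          * Mx (n - k)
      = (n.factorial : ℝ) * (PowerSeries.coeff k (∑ i ∈ Finset.range (n + 1), (- daVs Mx) ^ i)
          * PowerSeries.coeff (n - k) (1 + daVs Mx)) := by
    intro k hk
    have hkn : k ≤ n := Nat.lt_succ_iff.1 (Finset.mem_range.1 hk)
    rw [daCseqCoeff Mx (n + 1) k (Nat.lt_succ_of_le hkn), hG (n - k)]
    have hfac : (n.choose k : ℝ) * k.factorial * (n - k).factorial = n.factorial := by
      exact_mod_cast congrArg (Nat.cast : ℕ → ℝ) (Nat.choose_mul_factorial_mul_factorial hkn)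
    calc (n.choose k : ℝ) * ((k.factorial : ℝ) * PowerSeries.coeff k _)
          * (((n - k).factorial : ℝ) * PowerSeries.coeff (n - k) (1 + daVs Mx))
        = ((n.choose k : ℝ) * k.factorial * (n - k).factorial) *
            (PowerSeries.coeff k _ * PowerSeries.coeff (n - k) (1 + daVs Mx)) := by ring
      _ = _ := by rw [hfac]
  rw [Finset.sum_congr rfl hstep, ← Finset.mul_sum]
  have hconv : (∑ k ∈ Finset.range (n + 1),
      PowerSeries.coeff k (∑ i ∈ Finset.range (n + 1), (- daVs Mx) ^ i)
        * PowerSeries.coeff (n - k) (1 + daVs Mx))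
      = PowerSeries.coeff n ((∑ i ∈ Finset.range (n + 1), (- daVs Mx) ^ i) * (1 + daVs Mx)) := by
    rw [PowerSeries.coeff_mul, Finset.Nat.sum_antidiagonal_eq_sum_range_succ_mk]
  rw [hconv, daGeomPart Mx n hn, mul_zero]

lemma daPascalSum (F G : ℕ → ℝ) (n : ℕ) :
    ∑ k ∈ Finset.range (n + 1), (n.choose k : ℝ) * (F (k + 1) * G (n - k) + F k * G (n - k + 1))
      = ∑ k ∈ Finset.range (n + 2), ((n + 1).choose k : ℝ) * (F k * G (n + 1 - k)) := by
  have L1 : ∑ k ∈ Finset.range (n + 1), (n.choose k : ℝ) * (F (k+1) * G (n-k) + F k * G (n-k+1))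
      = (∑ k ∈ Finset.range (n + 1), (n.choose k : ℝ) * (F (k+1) * G (n-k)))
        + ∑ k ∈ Finset.range (n + 1), (n.choose k : ℝ) * (F k * G (n-k+1)) := by
    rw [← Finset.sum_add_distrib]; exact Finset.sum_congr rfl fun k _ => by ring
  have L2 : ∑ k ∈ Finset.range (n + 1), (n.choose k : ℝ) * (F k * G (n-k+1))
      = (∑ k ∈ Finset.range n, (n.choose (k+1) : ℝ) * (F (k+1) * G (n-k))) + F 0 * G (n+1) := by
    rw [Finset.sum_range_succ']
    congr 1
    · refine Finset.sum_congr rfl fun k hk => ?_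
      have : n - (k+1) + 1 = n - k := by have := Finset.mem_range.1 hk; omega
      rw [this]
    · simp
  have L3 : ∑ k ∈ Finset.range (n + 1), ((n.choose (k+1) : ℝ)) * (F (k+1) * G (n-k))
      = ∑ k ∈ Finset.range n, (n.choose (k+1) : ℝ) * (F (k+1) * G (n-k)) := by
    rw [Finset.sum_range_succ, Nat.choose_succ_self]; simp
  have R : ∑ k ∈ Finset.range (n + 2), ((n+1).choose k : ℝ) * (F k * G (n+1-k))
      = (∑ k ∈ Finset.range (n + 1), (((n.choose k : ℝ)) + (n.choose (k+1) : ℝ)) * (F (k+1) * G (n-k)))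
        + F 0 * G (n+1) := by
    rw [Finset.sum_range_succ']
    congr 1
    · refine Finset.sum_congr rfl fun k _ => ?_
      rw [Nat.choose_succ_succ]
      have h2 : n + 1 - (k+1) = n - k := by omega
      rw [h2]; push_cast; ring
    · simp
  rw [L1, L2, R]
  have split : ∑ k ∈ Finset.range (n+1), ((n.choose k : ℝ) + n.choose (k+1)) * (F (k+1) * G (n-k))
      = (∑ k ∈ Finset.range (n+1), (n.choose k : ℝ) * (F (k+1) * G (n-k)))
        + ∑ k ∈ Finset.range (n+1), (n.choose (k+1) : ℝ) * (F (k+1) * G (n-k)) := by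
    rw [← Finset.sum_add_distrib]; exact Finset.sum_congr rfl fun k _ => by ring
  rw [split, L3]; ring

lemma daLeibniz (f g : ℝ → ℝ) (hf : ContDiff ℝ (⊤ : ℕ∞) f) (hg : ContDiff ℝ (⊤ : ℕ∞) g) :
    ∀ n : ℕ, iteratedDeriv n (fun z => f z * g z)
      = fun z => ∑ k ∈ Finset.range (n + 1),
          (n.choose k : ℝ) * (iteratedDeriv k f z * iteratedDeriv (n - k) g z) := by
  have hdf : ∀ m, Differentiable ℝ (iteratedDeriv m f) := fun m =>
    hf.differentiable_iteratedDeriv m (by exact_mod_cast lt_top_iff_ne_top.2 (by simp))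
  have hdg : ∀ m, Differentiable ℝ (iteratedDeriv m g) := fun m =>
    hg.differentiable_iteratedDeriv m (by exact_mod_cast lt_top_iff_ne_top.2 (by simp))
  intro n
  induction n with
  | zero => funext z; simp
  | succ n ih =>
    rw [iteratedDeriv_succ, ih]
    funext z
    rw [deriv_fun_sum (fun k _ => by
      exact (((hdf k z).hasDerivAt.mul (hdg (n-k) z).hasDerivAt).const_mul
        ((n.choose k : ℝ))).differentiableAt)]
    have hterm : ∀ k ∈ Finset.range (n + 1),
        deriv (fun y => (n.choose k : ℝ) * (iteratedDeriv k f y * iteratedDeriv (n-k) g y)) z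
        = (n.choose k : ℝ) * (iteratedDeriv (k+1) f z * iteratedDeriv (n-k) g z
            + iteratedDeriv k f z * iteratedDeriv (n-k+1) g z) := by
      intro k _
      have h1 : HasDerivAt (iteratedDeriv k f) (iteratedDeriv (k+1) f z) z := by
        rw [iteratedDeriv_succ]; exact (hdf k z).hasDerivAt
      have h2 : HasDerivAt (iteratedDeriv (n-k) g) (iteratedDeriv (n-k+1) g z) z := by
        rw [iteratedDeriv_succ]; exact (hdg (n-k) z).hasDerivAt
      exact ((h1.mul h2).const_mul _).deriv
    rw [Finset.sum_congr rfl hterm]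
    exact daPascalSum (fun k => iteratedDeriv k f z) (fun k => iteratedDeriv k g z) n

lemma daIteratedDerivConstSucc : ∀ (m : ℕ) (c : ℝ), iteratedDeriv (m+1) (fun _ : ℝ => c) = fun _ => 0 := by
  intro m
  induction m with
  | zero => intro c; rw [iteratedDeriv_one]; funext z; exact deriv_const z c
  | succ m ih =>
    intro c
    rw [iteratedDeriv_succ']
    have : deriv (fun _ : ℝ => c) = fun _ : ℝ => (0:ℝ) := funext fun z => deriv_const z c
    rw [this]
    exact ih 0

lemma daIteratedDerivExpMul (x : ℝ) : ∀ k, iteratedDeriv k (fun z : ℝ => Real.exp (x * z))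
    = fun z => x ^ k * Real.exp (x * z) := by
  intro k
  induction k with
  | zero => funext z; simp
  | succ k ih =>
    rw [iteratedDeriv_succ, ih]
    funext z
    have hin : HasDerivAt (fun z : ℝ => x * z) x z := by
      simpa using (hasDerivAt_id z).const_mul x
    have h : HasDerivAt (fun z : ℝ => Real.exp (x * z)) (Real.exp (x * z) * x) z := hin.exp
    have := (h.const_mul (x ^ k)).deriv
    rw [this]; ring

lemma daExpMulSmooth (x : ℝ) : ContDiff ℝ (⊤ : ℕ∞) (fun z : ℝ => Real.exp (x * z)) :=
  Real.contDiff_exp.comp (contDiff_const.mul contDiff_id)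

lemma daSmoothTrunc (f : ℝ → ℝ) (U : Set ℝ) (hU : IsOpen U) (h0 : (0:ℝ) ∈ U)
    (hf : ∀ y ∈ U, ContDiffAt ℝ (⊤ : ℕ∞) f y) :
    ∃ f' : ℝ → ℝ, ContDiff ℝ (⊤ : ℕ∞) f' ∧ f' =ᶠ[nhds 0] f := by
  obtain ⟨ε, hε, hball⟩ := Metric.isOpen_iff.1 hU 0 h0
  have h1 : (0:ℝ) < ε/3 := by linarith
  have h2 : ε/3 < 2*ε/3 := by linarith
  let φ : ContDiffBump (0:ℝ) := ⟨ε/3, 2*ε/3, h1, h2⟩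
  refine ⟨fun z => φ z * f z, ?_, ?_⟩
  · rw [contDiff_iff_contDiffAt]
    intro y
    by_cases hy : y ∈ U
    · exact ((φ.contDiff (n := ⊤)).contDiffAt).mul (hf y hy)
    · have hy2 : y ∉ Metric.closedBall (0:ℝ) (2*ε/3) := by
        intro hmem
        exact hy (hball (Metric.mem_ball.2 (lt_of_le_of_lt (Metric.mem_closedBall.1 hmem)
          (by linarith))))
      have hopen : IsOpen (Metric.closedBall (0:ℝ) (2*ε/3))ᶜ :=
        (Metric.isClosed_closedBall).isOpen_compl
      have hev : ∀ᶠ z in nhds y, φ z * f z = 0 := by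
        filter_upwards [hopen.mem_nhds hy2] with z hz
        rw [φ.zero_of_le_dist (le_of_lt (by simpa [Metric.mem_closedBall] using hz))]
        ring
      exact (contDiffAt_const (c := (0:ℝ))).congr_of_eventuallyEq hev
  · filter_upwards [Metric.ball_mem_nhds (0:ℝ) h1] with z hz
    rw [φ.one_of_mem_closedBall (Metric.ball_subset_closedBall hz)]
    ring

lemma daBellZero (x : ℕ → ℝ) : Bell 0 0 x = 1 := by
  rw [daBellEqW, W_k_zero]; simp

theorem stmt14 (lam β p q r : ℝ) (hlam : lam < 0) (hβ : 0 < β)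
    (hp : 0 < p) (hp1 : p < 1) (hq : q = 1 - p) (hr : 0 < r) (n : ℕ) (x : ℝ) :
    P lam β p q r n x
      = ∑ k ∈ Finset.range (n + 1),
          (n.choose k : ℝ) *
            (∑ i ∈ Finset.range (n - k + 1),
              (-1 : ℝ) ^ i * i.factorial * Bell (n - k) i (M lam β p q r)) *
          x ^ k := by
  set Fz : ℝ → ℝ := fun z => 1 + lam * r * Real.log (p / (1 - q * Real.exp z)) with hFzdef
  set fb : ℝ → ℝ := fun z => Fz z ^ (-β / lam) with hfbdef
  set gb : ℝ → ℝ := fun z => Fz z ^ (β / lam) with hgbdef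
  set V1 : Set ℝ := {z | 0 < 1 - q * Real.exp z} with hV1def
  have hV1open : IsOpen V1 := isOpen_lt continuous_const (by fun_prop)
  have hFzsm : ∀ y ∈ V1, ContDiffAt ℝ (⊤ : ℕ∞) Fz y := by
    intro y hy
    have hy' : 0 < 1 - q * Real.exp y := hy
    have h1 : ContDiffAt ℝ (⊤ : ℕ∞) (fun z => 1 - q * Real.exp z) y :=
      contDiffAt_const.sub (contDiffAt_const.mul Real.contDiff_exp.contDiffAt)
    have h2 : ContDiffAt ℝ (⊤ : ℕ∞) (fun z => p / (1 - q * Real.exp z)) y :=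
      contDiffAt_const.div h1 (ne_of_gt hy')
    have h3 := h2.log (ne_of_gt (div_pos hp hy'))
    exact contDiffAt_const.add (contDiffAt_const.mul h3)
  set U : Set ℝ := V1 ∩ Fz ⁻¹' (Set.Ioi 0) with hUdef
  have hUopen : IsOpen U :=
    ContinuousOn.isOpen_inter_preimage
      (fun y hy => (hFzsm y hy).continuousAt.continuousWithinAt) hV1open isOpen_Ioi
  have hFz0 : Fz 0 = 1 := by
    show 1 + lam * r * Real.log (p / (1 - q * Real.exp 0)) = 1
    rw [Real.exp_zero, mul_one, show 1 - q = p by rw [hq]; ring,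
      div_self (ne_of_gt hp), Real.log_one]
    ring
  have h0V1 : (0:ℝ) ∈ V1 := by
    show 0 < 1 - q * Real.exp 0
    rw [Real.exp_zero, mul_one, hq]; linarith
  have h0U : (0:ℝ) ∈ U := ⟨h0V1, by show Fz 0 ∈ Set.Ioi 0; rw [hFz0]; norm_num⟩
  have hfbsm : ∀ y ∈ U, ContDiffAt ℝ (⊤ : ℕ∞) fb y := fun y hy =>
    (hFzsm y hy.1).rpow_const_of_ne (ne_of_gt hy.2)
  have hgbsm : ∀ y ∈ U, ContDiffAt ℝ (⊤ : ℕ∞) gb y := fun y hy =>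
    (hFzsm y hy.1).rpow_const_of_ne (ne_of_gt hy.2)
  have hfg1 : ∀ y ∈ U, fb y * gb y = 1 := by
    intro y hy
    have hpos : 0 < Fz y := hy.2
    show Fz y ^ (-β/lam) * Fz y ^ (β/lam) = 1
    rw [← Real.rpow_add hpos, show -β/lam + β/lam = 0 by ring, Real.rpow_zero]
  obtain ⟨f', hf's, hf'e⟩ := daSmoothTrunc fb U hUopen h0U hfbsm
  obtain ⟨g', hg's, hg'e⟩ := daSmoothTrunc gb U hUopen h0U hgbsm
  have hMgb : ∀ j : ℕ, M lam β p q r j = iteratedDeriv j gb 0 := fun j => rfl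
  have hMg' : ∀ j : ℕ, M lam β p q r j = iteratedDeriv j g' 0 := fun j => by
    rw [hMgb j]; exact (Filter.EventuallyEq.iteratedDeriv_eq j hg'e).symm
  have hM0 : M lam β p q r 0 = 1 := by
    rw [hMgb 0, iteratedDeriv_zero]
    show Fz 0 ^ (β/lam) = 1
    rw [hFz0, Real.one_rpow]
  set D : ℕ → ℝ := fun k => iteratedDeriv k fb 0 with hDdef
  have hD' : ∀ k, D k = iteratedDeriv k f' 0 := fun k =>
    (Filter.EventuallyEq.iteratedDeriv_eq k hf'e).symm
  have hD0 : D 0 = 1 := by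
    show iteratedDeriv 0 fb 0 = 1
    rw [iteratedDeriv_zero]
    show Fz 0 ^ (-β/lam) = 1
    rw [hFz0, Real.one_rpow]
  have hrec : ∀ m : ℕ, m ≠ 0 →
      ∑ k ∈ Finset.range (m+1), (m.choose k : ℝ) * (D k * M lam β p q r (m-k)) = 0 := by
    intro m hm
    have e0 : ∑ k ∈ Finset.range (m+1), (m.choose k : ℝ) * (D k * M lam β p q r (m-k))
        = ∑ k ∈ Finset.range (m+1), (m.choose k : ℝ) *
            (iteratedDeriv k f' 0 * iteratedDeriv (m-k) g' 0) :=
      Finset.sum_congr rfl fun k _ => by rw [hD' k, hMg' (m-k)]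
    have e1 : ∑ k ∈ Finset.range (m+1), (m.choose k : ℝ) *
          (iteratedDeriv k f' 0 * iteratedDeriv (m-k) g' 0)
        = iteratedDeriv m (fun z => f' z * g' z) 0 :=
      (congrFun (daLeibniz f' g' hf's hg's m) 0).symm
    have e2 : iteratedDeriv m (fun z => f' z * g' z) 0
        = iteratedDeriv m (fun _ : ℝ => (1:ℝ)) 0 := by
      apply Filter.EventuallyEq.iteratedDeriv_eq
      have hU1 : ∀ᶠ z in nhds 0, fb z * gb z = (1:ℝ) := by
        filter_upwards [hUopen.mem_nhds h0U] with z hz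
        exact hfg1 z hz
      exact (hf'e.mul hg'e).trans hU1
    obtain ⟨m', rfl⟩ := Nat.exists_eq_succ_of_ne_zero hm
    have e3 : iteratedDeriv (m'+1) (fun _ : ℝ => (1:ℝ)) 0 = 0 := by
      rw [daIteratedDerivConstSucc m' 1]
    rw [e0, e1, e2, e3]
  have hDc : ∀ k : ℕ, D k
      = ∑ i ∈ Finset.range (k+1), (-1:ℝ)^i * i.factorial * Bell k i (M lam β p q r) := by
    intro k
    induction k using Nat.strong_induction_on with
    | _ k ih =>
      cases k with
      | zero =>
        rw [hD0, Finset.sum_range_one, daBellZero]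
        simp
      | succ m =>
        have e1 := hrec (m+1) (Nat.succ_ne_zero m)
        have e2 := daMainComb (M lam β p q r) hM0 (m+1) (Nat.succ_ne_zero m)
        rw [Finset.sum_range_succ] at e1 e2
        have e3 : ∑ k ∈ Finset.range (m+1),
              ((m+1).choose k : ℝ) * (D k * M lam β p q r (m+1-k))
            = ∑ k ∈ Finset.range (m+1), ((m+1).choose k : ℝ) *
                (∑ i ∈ Finset.range (k+1), (-1:ℝ)^i * i.factorial * Bell k i (M lam β p q r))
                * M lam β p q r (m+1-k) :=
          Finset.sum_congr rfl fun j hj => by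
            rw [ih j (Finset.mem_range.1 hj)]; ring
        simp only [Nat.choose_self, Nat.cast_one, Nat.sub_self, hM0, one_mul, mul_one] at e1 e2
        linarith [e1, e2, e3]
  have hP : P lam β p q r n x = iteratedDeriv n (fun z => Real.exp (x*z) * fb z) 0 := rfl
  have hEe : (fun z => Real.exp (x*z) * fb z) =ᶠ[nhds 0] (fun z => Real.exp (x*z) * f' z) := by
    filter_upwards [hf'e] with z hz
    rw [hz]
  rw [hP, Filter.EventuallyEq.iteratedDeriv_eq n hEe,
    congrFun (daLeibniz (fun z => Real.exp (x*z)) f' (daExpMulSmooth x) hf's n) 0]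
  refine Finset.sum_congr rfl fun k hk => ?_
  rw [congrFun (daIteratedDerivExpMul x k) 0, ← hD' (n-k), hDc (n-k)]
  rw [mul_zero, Real.exp_zero, mul_one]
  ring
end
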